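/- arXiv:math/0204026 — 6 statements merged into one kernel-verified Lean document; each statement's English description precedes it below -/
import Mathlib

section
/- For words u and v over an alphabet A, and functions φ_i indexed by letters, the iterated integral functional ⟨w⟩ = ∫_{a≤x_n<⋯<x_1≤b} φ_{i_1}(x_1)⋯φ_{i_n}(x_n) dx satisfies ⟨u⟩·⟨v⟩ = ⟨u ⧢ v⟩, where ⧢ denotes the shuffle product extended linearly (Chen's lemma). -/
/-- The multiset of shuffles of two words. -/
def shuffles {I : Type*} : List I → List I → Multiset (List I)
  | [], v => {v}
  | a :: u, [] => {a :: u}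
  | a :: u, b :: v =>
      (shuffles u (b :: v)).map (a :: ·) + (shuffles (a :: u) v).map (b :: ·)
  termination_by u v => u.length + v.length

/-- The iterated integral `⟨w⟩(t) = ∫_a^t φ_{i₁}(x₁) ∫_a^{x₁} φ_{i₂}(x₂) ⋯ dx`
associated to a word `w = i₁ i₂ ⋯ iₙ`. -/
noncomputable def iterInt {I : Type*} (φ : I → ℝ → ℝ) (a : ℝ) : List I → ℝ → ℝ
  | [] => fun _ => 1
  | i :: w => fun t => ∫ x in a..t, φ i x * iterInt φ a w x

lemma iterInt_continuous {I : Type*} (φ : I → ℝ → ℝ) (hφ : ∀ i, Continuous (φ i)) (a : ℝ) :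
    ∀ w : List I, Continuous (iterInt φ a w)
  | [] => continuous_const
  | i :: w => by
      have h := iterInt_continuous φ hφ a w
      have hc : Continuous fun x => φ i x * iterInt φ a w x := (hφ i).mul h
      simpa [iterInt] using
        intervalIntegral.continuous_primitive (fun x y => hc.intervalIntegrable x y) a

lemma hasDerivAt_iterInt_cons {I : Type*} (φ : I → ℝ → ℝ) (hφ : ∀ i, Continuous (φ i))
    (a : ℝ) (i : I) (w : List I) (t : ℝ) :
    HasDerivAt (iterInt φ a (i :: w)) (φ i t * iterInt φ a w t) t := by
  have hc : Continuous fun x => φ i x * iterInt φ a w x :=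
    (hφ i).mul (iterInt_continuous φ hφ a w)
  simpa [iterInt] using
    intervalIntegral.integral_hasDerivAt_right (hc.intervalIntegrable a t)
      (hc.stronglyMeasurableAtFilter _ _) hc.continuousAt

lemma iterInt_cons_self {I : Type*} (φ : I → ℝ → ℝ) (a : ℝ) (i : I) (w : List I) :
    iterInt φ a (i :: w) a = 0 := by
  simp [iterInt]

lemma hasDerivAt_msum {α : Type*} (S : Multiset α) (f : α → ℝ → ℝ) (f' : α → ℝ) (t : ℝ)
    (h : ∀ x ∈ S, HasDerivAt (f x) (f' x) t) :
    HasDerivAt (fun s => (S.map (fun x => f x s)).sum) ((S.map f').sum) t := by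
  induction S using Multiset.induction with
  | empty => simpa using hasDerivAt_const t (0 : ℝ)
  | cons x S ih =>
      simp only [Multiset.map_cons, Multiset.sum_cons]
      exact (h x (by simp)).add (ih fun y hy => h y (by simp [hy]))

theorem chen_aux {I : Type*} (φ : I → ℝ → ℝ) (hφ : ∀ i, Continuous (φ i)) (a : ℝ) :
    ∀ (u v : List I) (t : ℝ),
      iterInt φ a u t * iterInt φ a v t
        = ((shuffles u v).map (fun w => iterInt φ a w t)).sum
  | [], v, t => by simp [shuffles, iterInt]
  | i :: u, [], t => by simp [shuffles, iterInt]
  | i :: u, j :: v, t => by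
      set A := shuffles u (j :: v) with hA
      set B := shuffles (i :: u) v with hB
      have hR : ∀ s : ℝ, ((shuffles (i :: u) (j :: v)).map (fun w => iterInt φ a w s)).sum
          = (A.map (fun w => iterInt φ a (i :: w) s)).sum
            + (B.map (fun w => iterInt φ a (j :: w) s)).sum := by
        intro s
        rw [shuffles]
        simp [Multiset.map_map, Function.comp]
        rw [hA, hB]
      -- F := LHS - RHS has derivative 0 everywhere
      set F : ℝ → ℝ := fun s => iterInt φ a (i :: u) s * iterInt φ a (j :: v) s
          - ((A.map (fun w => iterInt φ a (i :: w) s)).sum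
            + (B.map (fun w => iterInt φ a (j :: w) s)).sum) with hF
      have hderiv : ∀ s : ℝ, HasDerivAt F 0 s := by
        intro s
        have hL : HasDerivAt (fun s => iterInt φ a (i :: u) s * iterInt φ a (j :: v) s)
            (φ i s * iterInt φ a u s * iterInt φ a (j :: v) s
              + iterInt φ a (i :: u) s * (φ j s * iterInt φ a v s)) s :=
          (hasDerivAt_iterInt_cons φ hφ a i u s).mul (hasDerivAt_iterInt_cons φ hφ a j v s)
        have hA' : HasDerivAt (fun s => (A.map (fun w => iterInt φ a (i :: w) s)).sum)
            ((A.map (fun w => φ i s * iterInt φ a w s)).sum) s :=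
          hasDerivAt_msum A _ _ s (fun w _ => hasDerivAt_iterInt_cons φ hφ a i w s)
        have hB' : HasDerivAt (fun s => (B.map (fun w => iterInt φ a (j :: w) s)).sum)
            ((B.map (fun w => φ j s * iterInt φ a w s)).sum) s :=
          hasDerivAt_msum B _ _ s (fun w _ => hasDerivAt_iterInt_cons φ hφ a j w s)
        have eA : ((A.map (fun w => φ i s * iterInt φ a w s)).sum)
            = φ i s * (iterInt φ a u s * iterInt φ a (j :: v) s) := by
          rw [chen_aux φ hφ a u (j :: v) s, ← hA]
          rw [← Multiset.sum_map_mul_left]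
        have eB : ((B.map (fun w => φ j s * iterInt φ a w s)).sum)
            = φ j s * (iterInt φ a (i :: u) s * iterInt φ a v s) := by
          rw [chen_aux φ hφ a (i :: u) v s, ← hB]
          rw [← Multiset.sum_map_mul_left]
        have := hL.sub (hA'.add hB')
        rw [eA, eB] at this
        rw [hF]
        exact this.congr_deriv (by ring)
      have hFconst : F t = F a := by
        have hdiff : Differentiable ℝ F := fun s => (hderiv s).differentiableAt
        exact is_const_of_deriv_eq_zero hdiff (fun s => (hderiv s).deriv) t a
      have hFa : F a = 0 := by
        have h1 : (A.map (fun w => iterInt φ a (i :: w) a)).sum = 0 := by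
          apply Multiset.sum_eq_zero
          intro x hx
          rcases Multiset.mem_map.mp hx with ⟨w, _, rfl⟩
          exact iterInt_cons_self φ a i w
        have h2 : (B.map (fun w => iterInt φ a (j :: w) a)).sum = 0 := by
          apply Multiset.sum_eq_zero
          intro x hx
          rcases Multiset.mem_map.mp hx with ⟨w, _, rfl⟩
          exact iterInt_cons_self φ a j w
        simp [hF, h1, h2, iterInt_cons_self]
      have := hFconst.trans hFa
      rw [hF] at this
      rw [hR t]
      simp only at this
      linarith
  termination_by u v => u.length + v.length

/-- **Chen's lemma**: the product of two iterated integrals is the iterated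
integral of the shuffle product of the corresponding words,
`⟨u⟩·⟨v⟩ = ⟨u ⧢ v⟩` (the shuffle product extended linearly). -/
theorem chen_lemma {I : Type*} (φ : I → ℝ → ℝ) (hφ : ∀ i, Continuous (φ i))
    (a b : ℝ) (u v : List I) :
    iterInt φ a u b * iterInt φ a v b
      = ((shuffles u v).map (fun w => iterInt φ a w b)).sum :=
  chen_aux φ hφ a u v b
end

section
/- For nonzero elements x_1,…,x_m of a field (such that all partial sums x_{σ(1)}+⋯+x_{σ(k)} are nonzero), ∑_{σ∈S_m} 1/(x_{σ(1)}(x_{σ(1)}+x_{σ(2)})⋯(x_{σ(1)}+⋯+x_{σ(m)})) = 1/(x_1 x_2 ⋯ x_m). -/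
open Finset Equiv

private lemma fin_Iic_last (m : ℕ) : Finset.Iic (Fin.last m) = Finset.univ := by
  ext j; simp [Fin.le_last]

private lemma sum_Iic_castSucc {M : Type*} [AddCommMonoid M] {m : ℕ} (f : Fin (m + 1) → M)
    (k : Fin m) :
    ∑ i ∈ Finset.Iic k.castSucc, f i = ∑ i ∈ Finset.Iic k, f i.castSucc := by
  have hmap : (Finset.Iic k).map Fin.castSuccOrderEmb.toEmbedding = Finset.Iic k.castSucc := by
    ext j
    simp only [Finset.mem_map, Finset.mem_Iic, Fin.castSuccOrderEmb,
      OrderEmbedding.coe_ofStrictMono, Function.Embedding.coeFn_mk, RelEmbedding.coe_mk]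
    constructor
    · rintro ⟨i, hi, rfl⟩; exact Fin.castSucc_le_castSucc_iff.mpr hi
    · intro hj
      have hj' : j < Fin.last m := lt_of_le_of_lt hj (Fin.castSucc_lt_last k)
      exact ⟨j.castPred hj'.ne, by rw [← Fin.castSucc_le_castSucc_iff, Fin.castSucc_castPred]; exact hj, by simp⟩
  rw [← hmap, Finset.sum_map]
  rfl

private lemma aux {F : Type*} [Field F] : ∀ (m : ℕ) (x : Fin m → F),
    (∀ (σ : Equiv.Perm (Fin m)) (k : Fin m), ∑ i ∈ Finset.Iic k, x (σ i) ≠ 0) →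
    ∑ σ : Equiv.Perm (Fin m), ∏ k : Fin m, (∑ i ∈ Finset.Iic k, x (σ i))⁻¹
      = (∏ i : Fin m, x i)⁻¹ := by
  intro m
  induction m with
  | zero => intro x h; simp
  | succ m ih =>
    intro x h
    -- nonzero facts
    have hx : ∀ i, x i ≠ 0 := by
      intro i
      have := h (Equiv.swap 0 i) 0
      have h0 : Finset.Iic (0 : Fin (m + 1)) = {0} := by ext j; simp [Fin.le_zero_iff]
      simpa [h0] using this
    have hsum : ∑ i, x i ≠ 0 := by
      have := h 1 (Fin.last m)
      simpa [fin_Iic_last] using this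
    -- the reindexing equivalence
    set r : Equiv.Perm (Fin (m + 1)) := finRotate (m + 1) with hr
    set E : Equiv.Perm (Fin (m + 1)) ≃ Fin (m + 1) × Equiv.Perm (Fin m) :=
      (Equiv.mulRight r⁻¹).trans Equiv.Perm.decomposeFin with hE
    have hEsymm : ∀ p τ, E.symm (p, τ) = Equiv.Perm.decomposeFin.symm (p, τ) * r := by
      intro p τ; rfl
    have hlast : ∀ p τ, (E.symm (p, τ)) (Fin.last m) = p := by
      intro p τ
      rw [hEsymm]
      simp [Equiv.Perm.mul_apply, hr, finRotate_last]
    have hcast : ∀ p τ (i : Fin m),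
        (E.symm (p, τ)) i.castSucc = Equiv.swap 0 p (τ i).succ := by
      intro p τ i
      rw [hEsymm]
      have : r i.castSucc = i.succ := by
        simp [hr, Fin.coeSucc_eq_succ]
      simp [Equiv.Perm.mul_apply, this, Equiv.Perm.decomposeFin_symm_apply_succ]
    -- rewrite sum via E.symm
    rw [← Equiv.sum_comp E.symm, Fintype.sum_prod_type]
    have key : ∀ p : Fin (m + 1), ∀ τ : Equiv.Perm (Fin m),
        (∏ k : Fin (m + 1), (∑ i ∈ Finset.Iic k, x ((E.symm (p, τ)) i))⁻¹)
          = (∑ i, x i)⁻¹ *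
            ∏ k : Fin m, (∑ i ∈ Finset.Iic k, (fun j => x (Equiv.swap 0 p j.succ)) (τ i))⁻¹ := by
      intro p τ
      have hA : ∀ k : Fin m, ∑ i ∈ Finset.Iic k.castSucc, x ((E.symm (p, τ)) i)
          = ∑ i ∈ Finset.Iic k, x (Equiv.swap 0 p (τ i).succ) := by
        intro k
        rw [sum_Iic_castSucc]
        exact Finset.sum_congr rfl fun i _ => by rw [hcast]
      have hB : ∑ i ∈ Finset.Iic (Fin.last m), x ((E.symm (p, τ)) i) = ∑ i, x i := by
        rw [fin_Iic_last]
        exact Equiv.sum_comp (E.symm (p, τ)) x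
      rw [Fin.prod_univ_castSucc, hB, mul_comm]
      congr 1
      exact Finset.prod_congr rfl fun k _ => by rw [hA]
    calc ∑ p : Fin (m + 1), ∑ τ : Equiv.Perm (Fin m),
          ∏ k : Fin (m + 1), (∑ i ∈ Finset.Iic k, x ((E.symm (p, τ)) i))⁻¹
        = ∑ p : Fin (m + 1), (∑ i, x i)⁻¹ *
            ∑ τ : Equiv.Perm (Fin m),
              ∏ k : Fin m, (∑ i ∈ Finset.Iic k, (fun j => x (Equiv.swap 0 p j.succ)) (τ i))⁻¹ := by
          refine Finset.sum_congr rfl fun p _ => ?_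
          rw [Finset.mul_sum]
          exact Finset.sum_congr rfl fun τ _ => key p τ
      _ = ∑ p : Fin (m + 1), (∑ i, x i)⁻¹ * (∏ j : Fin m, x (Equiv.swap 0 p j.succ))⁻¹ := by
          refine Finset.sum_congr rfl fun p _ => ?_
          congr 1
          refine ih (fun j => x (Equiv.swap 0 p j.succ)) ?_
          intro τ k
          have := h (E.symm (p, τ)) k.castSucc
          rw [sum_Iic_castSucc] at this
          convert this using 2 with i hi
          rw [hcast]
      _ = (∏ i, x i)⁻¹ := by
          have hprod : ∀ p : Fin (m + 1),
              ∏ j : Fin m, x (Equiv.swap 0 p j.succ) = (∏ i, x i) * (x p)⁻¹ := by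
            intro p
            have h1 : ∏ i : Fin (m + 1), x (Equiv.swap 0 p i) = ∏ i, x i :=
              Equiv.prod_comp (Equiv.swap 0 p) x
            rw [Fin.prod_univ_succ] at h1
            have h2 : Equiv.swap 0 p (0 : Fin (m + 1)) = p := Equiv.swap_apply_left 0 p
            rw [h2] at h1
            rw [eq_mul_inv_iff_mul_eq₀ (hx p), mul_comm]
            exact h1
          have : ∀ p : Fin (m + 1),
              (∑ i, x i)⁻¹ * (∏ j : Fin m, x (Equiv.swap 0 p j.succ))⁻¹
                = (∑ i, x i)⁻¹ * (x p * (∏ i, x i)⁻¹) := by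
            intro p
            rw [hprod p, mul_inv, inv_inv, mul_comm (_)⁻¹ (x p)]
          rw [Finset.sum_congr rfl fun p _ => this p]
          rw [← Finset.mul_sum, ← Finset.sum_mul, ← mul_assoc,
            inv_mul_cancel₀ hsum, one_mul]

/-- For nonzero elements `x₁,…,xₘ` of a field such that all partial sums
`x_{σ(1)} + ⋯ + x_{σ(k)}` (over all permutations `σ`) are nonzero,
`∑_{σ∈Sₘ} 1/(x_{σ(1)}(x_{σ(1)}+x_{σ(2)})⋯(x_{σ(1)}+⋯+x_{σ(m)})) = 1/(x₁ x₂ ⋯ xₘ)`. -/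
theorem sum_inv_partial_sums {F : Type*} [Field F] (m : ℕ) (x : Fin m → F)
    (hx : ∀ i, x i ≠ 0)
    (h : ∀ (σ : Equiv.Perm (Fin m)) (k : Fin m), ∑ i ∈ Finset.Iic k, x (σ i) ≠ 0) :
    ∑ σ : Equiv.Perm (Fin m), ∏ k : Fin m, (∑ i ∈ Finset.Iic k, x (σ i))⁻¹
      = (∏ i : Fin m, x i)⁻¹ := aux m x h
end

section
/- For any n ≥ 1 and nonzero elements x_1,…,x_n of a field with all partial sums nonzero, ∑_{k=0}^{n} (−1)^k R(x_k, x_{k-1},…,x_1) R(x_{k+1}, x_{k+2},…,x_n) = 0, where R(z_1,…,z_r) = 1/(z_1(z_1+z_2)⋯(z_1+⋯+z_r)) and R of the empty sequence is 1. -/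
/-- `R(z₁,…,z_r) = 1/(z₁(z₁+z₂)⋯(z₁+⋯+z_r))`, with `R` of the empty sequence equal
to `1`, for a sequence given as a list. -/
def Rfun {F : Type*} [Field F] (l : List F) : F :=
  ∏ j ∈ Finset.range l.length, ((l.take (j + 1)).sum)⁻¹

lemma lc_basisDivisor {F : Type*} [Field F] (a b : F) :
    (Lagrange.basisDivisor a b).leadingCoeff = (a - b)⁻¹ := by
  rcases eq_or_ne a b with h | h
  · simp [h, Lagrange.basisDivisor_self]
  · unfold Lagrange.basisDivisor
    rw [Polynomial.leadingCoeff_mul, Polynomial.leadingCoeff_C,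
      (Polynomial.monic_X_sub_C b).leadingCoeff, mul_one]

lemma key_lagrange {F : Type*} [Field F] {ι : Type*} [DecidableEq ι] (t : Finset ι) (v : ι → F)
    (hv : Set.InjOn v t) (ht : 2 ≤ t.card) :
    ∑ k ∈ t, ∏ i ∈ t.erase k, (v k - v i)⁻¹ = 0 := by
  have hne : t.Nonempty := Finset.card_pos.mp (by omega)
  have h := Lagrange.sum_basis hv hne
  have h2 := congrArg (fun p => Polynomial.coeff p (t.card - 1)) h
  simp only [Polynomial.finset_sum_coeff, Polynomial.coeff_one] at h2
  rw [if_neg (by omega)] at h2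
  rw [← h2]
  refine Finset.sum_congr rfl fun k hk => ?_
  have hnat : (Lagrange.basis t v k).natDegree = t.card - 1 :=
    Polynomial.natDegree_eq_of_degree_eq_some (Lagrange.degree_basis hv hk)
  rw [← hnat, Polynomial.coeff_natDegree]
  unfold Lagrange.basis
  rw [Polynomial.leadingCoeff_prod]
  exact (Finset.prod_congr rfl fun i _ => lc_basisDivisor _ _).symm

lemma sum_take_drop {F : Type*} [AddCommMonoid F] (l : List F) (k j : ℕ) :
    (l.take k).sum + ((l.drop k).take j).sum = (l.take (k + j)).sum := by
  rw [List.take_add, List.sum_append]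

/-- For `n ≥ 1` and elements `x₁,…,xₙ` of a field with all the denominators appearing
(partial sums of consecutive `xᵢ` in the indicated orders) nonzero,
`∑_{k=0}^{n} (−1)^k R(x_k,…,x₁) R(x_{k+1},…,xₙ) = 0`. -/
theorem alternating_R_sum {F : Type*} [Field F] (n : ℕ) (hn : 1 ≤ n) (x : Fin n → F)
    (h1 : ∀ k ≤ n, ∀ j < k, ((((List.ofFn x).take k).reverse).take (j + 1)).sum ≠ 0)
    (h2 : ∀ k ≤ n, ∀ j < n - k, (((List.ofFn x).drop k).take (j + 1)).sum ≠ 0) :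
    ∑ k ∈ Finset.range (n + 1),
        (-1 : F) ^ k * (Rfun (((List.ofFn x).take k).reverse) * Rfun ((List.ofFn x).drop k))
      = 0 := by
  set l : List F := List.ofFn x with hl
  have hlen : l.length = n := by rw [hl, List.length_ofFn]
  set S : ℕ → F := fun k => (l.take k).sum with hS
  have hsum : ∀ m : ℕ, (l.take m).sum = S m := fun _ => rfl
  have hdropsum : ∀ k j : ℕ, ((l.drop k).take j).sum = S (k + j) - S k :=
    fun k j => eq_sub_of_add_eq' (sum_take_drop l k j)
  -- injectivity of S on range (n+1)
  have hkey : ∀ a b : ℕ, a < b → b < n + 1 → S a ≠ S b := by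
    intro a b hab hb hSab
    have hz := h2 a (by omega) (b - a - 1) (by omega)
    rw [hdropsum a (b - a - 1 + 1), show a + (b - a - 1 + 1) = b from by omega] at hz
    exact hz (by rw [hSab]; ring)
  have hSinj : Set.InjOn S (Finset.range (n + 1) : Set ℕ) := by
    intro a ha b hb hab
    simp only [Finset.coe_range, Set.mem_Iio] at ha hb
    by_contra hne
    rcases lt_or_gt_of_ne hne with h | h
    · exact hkey a b h hb hab
    · exact hkey b a h ha hab.symm
  -- compute the reversed-take Rfun
  have hA : ∀ k ≤ n, Rfun ((l.take k).reverse) = ∏ i ∈ Finset.range k, (S k - S i)⁻¹ := by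
    intro k hk
    have hlk : (l.take k).length = k := by rw [List.length_take, hlen]; omega
    unfold Rfun
    rw [List.length_reverse, hlk]
    rw [← Finset.prod_range_reflect (fun i => (S k - S i)⁻¹) k]
    refine Finset.prod_congr rfl fun j hj => ?_
    rw [Finset.mem_range] at hj
    congr 1
    rw [List.take_reverse, List.sum_reverse, hlk]
    have hlen2 : ((l.take k).drop (k - (j + 1))).length = j + 1 := by
      rw [List.length_drop, hlk]; omega
    rw [← List.take_of_length_le (le_of_eq hlen2)]
    have hsplit := sum_take_drop (l.take k) (k - (j + 1)) (j + 1)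
    rw [show k - (j + 1) + (j + 1) = k from by omega, List.take_take,
      min_eq_left (by omega : k - (j + 1) ≤ k), List.take_take, min_self,
      hsum (k - (j + 1)), hsum k] at hsplit
    rw [show k - 1 - j = k - (j + 1) from by omega]
    exact eq_sub_of_add_eq' hsplit
  -- compute the dropped Rfun
  have hB : ∀ k ≤ n, Rfun (l.drop k)
      = (-1 : F) ^ (n - k) * ∏ i ∈ Finset.Ico (k + 1) (n + 1), (S k - S i)⁻¹ := by
    intro k hk
    unfold Rfun
    rw [List.length_drop, hlen]
    rw [Finset.prod_Ico_eq_prod_range (fun i => (S k - S i)⁻¹) (k + 1) (n + 1)]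
    rw [show n + 1 - (k + 1) = n - k from by omega]
    rw [show ((-1 : F) ^ (n - k)) = ∏ _j ∈ Finset.range (n - k), (-1 : F) from by
      rw [Finset.prod_const, Finset.card_range]]
    rw [← Finset.prod_mul_distrib]
    refine Finset.prod_congr rfl fun j hj => ?_
    rw [hdropsum k (j + 1), show k + 1 + j = k + (j + 1) from by omega,
      ← neg_sub (S (k + (j + 1))) (S k), inv_neg]
    ring
  -- rewrite each term
  have hterm : ∀ k ∈ Finset.range (n + 1),
      (-1 : F) ^ k * (Rfun ((l.take k).reverse) * Rfun (l.drop k))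
        = (-1 : F) ^ n * ∏ i ∈ (Finset.range (n + 1)).erase k, (S k - S i)⁻¹ := by
    intro k hk
    rw [Finset.mem_range] at hk
    have hk' : k ≤ n := by omega
    rw [hA k hk', hB k hk']
    have hsplit : (Finset.range (n + 1)).erase k
        = Finset.range k ∪ Finset.Ico (k + 1) (n + 1) := by
      ext i
      simp only [Finset.mem_erase, Finset.mem_range, Finset.mem_union, Finset.mem_Ico]
      omega
    have hdisj : Disjoint (Finset.range k) (Finset.Ico (k + 1) (n + 1)) := by
      rw [Finset.disjoint_left]
      intro i hi hi'
      rw [Finset.mem_range] at hi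
      rw [Finset.mem_Ico] at hi'
      omega
    rw [hsplit, Finset.prod_union hdisj]
    rw [show ((-1 : F) ^ n) = (-1 : F) ^ k * (-1 : F) ^ (n - k) from by
      rw [← pow_add]; congr 1; omega]
    ring
  rw [Finset.sum_congr rfl hterm, ← Finset.mul_sum]
  rw [key_lagrange (Finset.range (n + 1)) S hSinj (by rw [Finset.card_range]; omega), mul_zero]
end

section
/- The antisymmetrization identity A R(x_1,…,x_n) := ∑_{σ∈S_n} ε(σ) R(x_{σ(1)},…,x_{σ(n)}) = ∏_{i=1}^n (1/x_i) · ∏_{i<j} (x_j − x_i)/(x_j + x_i), where R(z_1,…,z_n) = 1/(z_1(z_1+z_2)⋯(z_1+⋯+z_n)). -/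
open Finset Polynomial Equiv Equiv.Perm

section AuxSum

lemma aux_sum {F : Type*} [Field F] {m : ℕ} (x : Fin m → F) (hinj : Function.Injective x)
    (hs : ∀ i j : Fin m, i ≠ j → x i + x j ≠ 0) :
    ∑ j, x j * ∏ i ∈ Finset.univ.erase j, ((x j + x i) / (x j - x i)) = ∑ j, x j := by
  by_cases h2 : (2 : F) = 0
  · have key : ∀ j : Fin m, ∏ i ∈ Finset.univ.erase j, ((x j + x i) / (x j - x i)) = 1 := by
      intro j
      apply Finset.prod_eq_one
      intro i hi
      have hij : i ≠ j := (Finset.mem_erase.mp hi).1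
      have hxx : x j - x i = x j + x i := by linear_combination (-(x i)) * h2
      rw [hxx, div_self (hs j i hij.symm)]
    simp [key]
  rcases Nat.eq_zero_or_pos m with hm | hm
  · subst hm; simp
  have hd : ∀ j i : Fin m, i ≠ j → x j - x i ≠ 0 := fun j i hij h =>
    hij (hinj (sub_eq_zero.mp h)).symm
  set A : F[X] := ∏ i : Fin m, (X - C (-x i)) with hA
  set B : F[X] := ∏ i : Fin m, (X - C (x i)) with hB
  have monA : A.Monic := monic_prod_of_monic _ _ fun i _ => monic_X_sub_C _
  have monB : B.Monic := monic_prod_of_monic _ _ fun i _ => monic_X_sub_C _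
  have degA : A.natDegree = m := by
    rw [hA, natDegree_prod_of_monic _ _ fun i _ => monic_X_sub_C _]; simp
  have degB : B.natDegree = m := by
    rw [hB, natDegree_prod_of_monic _ _ fun i _ => monic_X_sub_C _]; simp
  have hcard : (Finset.univ : Finset (Fin m)).card = m := by simp
  have hQdeg : (A - B).degree < ((Finset.univ : Finset (Fin m)).card : ℕ) := by
    rw [hcard]
    calc (A - B).degree < A.degree := by
          apply Polynomial.degree_sub_lt
          · rw [degree_eq_natDegree monA.ne_zero, degree_eq_natDegree monB.ne_zero, degA, degB]
          · exact monA.ne_zero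
          · rw [monA.leadingCoeff, monB.leadingCoeff]
      _ = (m : WithBot ℕ) := by rw [degree_eq_natDegree monA.ne_zero, degA]
  have hinterp := Lagrange.eq_interpolate (f := A - B) (Set.injOn_of_injective hinj) hQdeg
  have hL : (A - B).coeff (m - 1) = 2 * ∑ j, x j := by
    have hnA : A.nextCoeff = ∑ j, x j := by
      rw [hA, prod_X_sub_C_nextCoeff]; simp
    have hnB : B.nextCoeff = -∑ j, x j := by
      rw [hB, prod_X_sub_C_nextCoeff]
    have h1A : A.coeff (m - 1) = ∑ j, x j := by
      rw [← hnA, nextCoeff_of_natDegree_pos (by omega), degA]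
    have h1B : B.coeff (m - 1) = -∑ j, x j := by
      rw [← hnB, nextCoeff_of_natDegree_pos (by omega), degB]
    rw [coeff_sub, h1A, h1B]; ring
  have hbasis : ∀ j : Fin m, (Lagrange.basis Finset.univ x j).coeff (m - 1)
      = ∏ i ∈ Finset.univ.erase j, (x j - x i)⁻¹ := by
    intro j
    rw [Lagrange.basis]
    have : ∀ i ∈ Finset.univ.erase j, Lagrange.basisDivisor (x j) (x i)
        = C (x j - x i)⁻¹ * (X - C (x i)) := fun i _ => rfl
    rw [Finset.prod_congr rfl this, Finset.prod_mul_distrib, ← map_prod]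
    set P : F[X] := ∏ i ∈ Finset.univ.erase j, (X - C (x i)) with hP
    have monP : P.Monic := monic_prod_of_monic _ _ fun i _ => monic_X_sub_C _
    have degP : P.natDegree = m - 1 := by
      rw [hP, natDegree_prod_of_monic _ _ fun i _ => monic_X_sub_C _]
      simp [Finset.card_erase_of_mem]
    rw [coeff_C_mul, ← degP, monP.coeff_natDegree, mul_one]
  have hR : ((Lagrange.interpolate Finset.univ x fun i => (A - B).eval (x i)).coeff (m - 1))
      = ∑ j, (2 * x j) * ∏ i ∈ Finset.univ.erase j, ((x j + x i) / (x j - x i)) := by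
    rw [Lagrange.interpolate_apply, finset_sum_coeff]
    refine Finset.sum_congr rfl fun j _ => ?_
    rw [coeff_C_mul, hbasis j]
    have hevB : B.eval (x j) = 0 := by
      rw [hB, eval_prod]
      exact Finset.prod_eq_zero (Finset.mem_univ j) (by simp)
    have hevA : A.eval (x j) = (2 * x j) * ∏ i ∈ Finset.univ.erase j, (x j + x i) := by
      rw [hA, eval_prod]
      have : ∀ i : Fin m, eval (x j) (X - C (-x i)) = x j + x i := by intro i; simp
      rw [Finset.prod_congr rfl fun i _ => this i, ← Finset.mul_prod_erase _ _ (Finset.mem_univ j)]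
      ring
    rw [eval_sub, hevA, hevB, sub_zero, mul_assoc, ← Finset.prod_mul_distrib]
    congr 1
    exact Finset.prod_congr rfl fun i _ => (div_eq_mul_inv _ _).symm
  have hco := congrArg (fun p => p.coeff (m - 1)) hinterp
  rw [hL, hR] at hco
  have h2' : (2 : F) ≠ 0 := h2
  apply mul_left_cancel₀ h2'
  rw [hco, Finset.mul_sum]
  exact Finset.sum_congr rfl fun j _ => by ring

end AuxSum

section Decomp

variable {n : ℕ}

/-- extension of a permutation of `Fin n` to `Fin (n+1)` fixing `last n`. -/
def extLast (τ : Perm (Fin n)) : Perm (Fin (n + 1)) :=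
  Equiv.permCongr finSuccEquivLast.symm (Equiv.optionCongr τ)

@[simp] lemma extLast_castSucc (τ : Perm (Fin n)) (i : Fin n) :
    extLast τ (Fin.castSucc i) = Fin.castSucc (τ i) := by
  simp [extLast, Equiv.permCongr_apply]

@[simp] lemma extLast_last (τ : Perm (Fin n)) : extLast τ (Fin.last n) = Fin.last n := by
  simp [extLast, Equiv.permCongr_apply]

@[simp] lemma sign_extLast (τ : Perm (Fin n)) : sign (extLast τ) = sign τ := by
  rw [extLast, Equiv.Perm.sign_permCongr, Equiv.optionCongr_sign]

/-- the cycle sending `last n` to `j` and shifting `[j, n)` up by one. -/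
def pij (j : Fin (n + 1)) : Perm (Fin (n + 1)) :=
  finSuccEquivLast.trans (finSuccEquiv' j).symm

@[simp] lemma pij_last (j : Fin (n + 1)) : pij j (Fin.last n) = j := by
  simp [pij]

@[simp] lemma pij_castSucc (j : Fin (n + 1)) (i : Fin n) :
    pij j (Fin.castSucc i) = j.succAbove i := by
  simp [pij]

lemma pij_eq_conj (j : Fin (n + 1)) :
    pij j = (Fin.revPerm (n := n + 1)).trans
      (((Fin.rev j).cycleRange.symm).trans Fin.revPerm) := by
  ext m
  refine Fin.lastCases ?_ (fun i => ?_) m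
  · simp [Fin.rev_last]
  · simp [Fin.rev_castSucc, Fin.cycleRange_symm_succ, Fin.rev_succAbove]

lemma sign_pij (j : Fin (n + 1)) : sign (pij j) = (-1) ^ (n - (j : ℕ)) := by
  have h : (pij j) = (Fin.revPerm (n := n + 1)) *
      ((Fin.rev j).cycleRange)⁻¹ * (Fin.revPerm (n := n + 1)) := by
    rw [pij_eq_conj]; rfl
  rw [h]
  simp only [map_mul, map_inv, Fin.sign_cycleRange]
  have hval : ((Fin.rev j : Fin (n + 1)) : ℕ) = n - (j : ℕ) := by
    rw [Fin.val_rev]; omega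
  rw [hval]
  have hself : ∀ u : ℤˣ, u⁻¹ = u := fun u => by
    rcases Int.units_eq_one_or u with h | h <;> simp [h]
  rcases Int.units_eq_one_or (sign (Fin.revPerm (n := n + 1))) with h | h <;>
    simp [h, hself, mul_comm, mul_assoc, mul_left_comm]

lemma phi_bijective :
    Function.Bijective (fun p : Fin (n + 1) × Perm (Fin n) => pij p.1 * extLast p.2) := by
  rw [Fintype.bijective_iff_injective_and_card]
  constructor
  · rintro ⟨j, τ⟩ ⟨j', τ'⟩ h
    have hj : j = j' := by
      have := congrArg (fun σ : Perm (Fin (n + 1)) => σ (Fin.last n)) h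
      simpa [Equiv.Perm.mul_apply] using this
    subst hj
    have hτ : τ = τ' := by
      ext i
      have := congrArg (fun σ : Perm (Fin (n + 1)) => σ (Fin.castSucc i)) h
      simp only [Equiv.Perm.mul_apply, extLast_castSucc, pij_castSucc] at this
      exact congrArg Fin.val (Fin.succAbove_right_injective this)
    simp [hτ]
  · simp [Fintype.card_perm, Nat.factorial_succ]

lemma Iic_castSucc_eq (k : Fin n) :
    Finset.Iic (Fin.castSucc k) = (Finset.Iic k).map Fin.castSuccEmb := by
  ext m
  simp only [Finset.mem_Iic, Finset.mem_map, Fin.castSuccEmb]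
  constructor
  · intro hm
    have hlt : m < Fin.last n := lt_of_le_of_lt hm (Fin.castSucc_lt_last k)
    obtain ⟨i, rfl⟩ : ∃ i : Fin n, Fin.castSucc i = m :=
      ⟨m.castPred hlt.ne, Fin.castSucc_castPred m hlt.ne⟩
    exact ⟨i, Fin.castSucc_le_castSucc_iff.mp hm, rfl⟩
  · rintro ⟨i, hi, rfl⟩
    exact Fin.castSucc_le_castSucc_iff.mpr hi

lemma Ioi_succAbove_erase (j : Fin (n + 1)) (i : Fin n) :
    (Finset.Ioi (j.succAbove i)).erase j = (Finset.Ioi i).map (j.succAboveEmb) := by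
  ext m
  simp only [Finset.mem_erase, Finset.mem_Ioi, Finset.mem_map, Fin.succAboveEmb,
    Function.Embedding.coeFn_mk]
  constructor
  · rintro ⟨hmj, hlt⟩
    obtain ⟨k, rfl⟩ := Fin.exists_succAbove_eq hmj
    exact ⟨k, Fin.succAbove_lt_succAbove_iff.mp hlt, rfl⟩
  · rintro ⟨k, hk, rfl⟩
    exact ⟨Fin.succAbove_ne j k, Fin.succAbove_lt_succAbove_iff.mpr hk⟩

lemma Iic_last_eq : Finset.Iic (Fin.last n) = Finset.univ := by
  ext m; simp [Fin.le_last]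

lemma filter_lt_eq_Iio (j : Fin (n + 1)) :
    Finset.univ.filter (fun a => a < j) = Finset.Iio j := by
  ext m; simp

lemma erase_univ_eq (j : Fin (n + 1)) :
    Finset.univ.erase j = Finset.Iio j ∪ Finset.Ioi j := by
  ext m
  simp only [Finset.mem_erase, Finset.mem_univ, and_true, Finset.mem_union, Finset.mem_Iio,
    Finset.mem_Ioi]
  exact ⟨fun h => h.lt_or_gt, fun h => h.elim ne_of_lt (fun h' => (ne_of_lt h').symm)⟩

end Decomp

lemma subset_sum_ne {F : Type*} [Field F] {n : ℕ} (x : Fin n → F)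
    (h2 : ∀ (σ : Equiv.Perm (Fin n)) (k : Fin n), ∑ i ∈ Finset.Iic k, x (σ i) ≠ 0)
    (S : Finset (Fin n)) (hS : S.Nonempty) : ∑ i ∈ S, x i ≠ 0 := by
  classical
  have hc1 : 1 ≤ S.card := Finset.card_pos.mpr hS
  have hcn : S.card ≤ n := by simpa using Finset.card_le_univ S
  set k : Fin n := ⟨S.card - 1, by omega⟩ with hk
  have hcard : (Finset.Iic k).card = S.card := by
    rw [Fin.card_Iic]; simp [hk]; omega
  have hcard1 : Fintype.card {a // a ∈ Finset.Iic k} = Fintype.card {a // a ∈ S} := by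
    rw [Fintype.card_coe, Fintype.card_coe, hcard]
  have hcard2 : Fintype.card {a // ¬ a ∈ Finset.Iic k} = Fintype.card {a // ¬ a ∈ S} := by
    rw [Fintype.card_subtype_compl, Fintype.card_subtype_compl, hcard1]
  set e1 := Fintype.equivOfCardEq hcard1 with he1
  set e2 := Fintype.equivOfCardEq hcard2 with he2
  set σ : Equiv.Perm (Fin n) :=
    (Equiv.sumCompl (· ∈ Finset.Iic k)).symm.trans
      ((e1.sumCongr e2).trans (Equiv.sumCompl (· ∈ S))) with hσ
  have happ : ∀ a (ha : a ∈ Finset.Iic k), σ a = (e1 ⟨a, ha⟩ : Fin n) := by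
    intro a ha
    simp [hσ, Equiv.sumCompl_symm_apply_of_pos (p := (· ∈ Finset.Iic k)) ha]
  have happ' : ∀ b (hb : b ∈ S), σ.symm b = (e1.symm ⟨b, hb⟩ : Fin n) := by
    intro b hb
    simp [hσ, Equiv.sumCompl_symm_apply_of_pos (p := (· ∈ S)) hb]
  have hsum : ∑ i ∈ Finset.Iic k, x (σ i) = ∑ i ∈ S, x i := by
    apply Finset.sum_nbij' (fun a => σ a) (fun b => σ.symm b)
    · intro a ha; rw [happ a ha]; exact (e1 ⟨a, ha⟩).2
    · intro b hb; rw [happ' b hb]; exact (e1.symm ⟨b, hb⟩).2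
    · intro a _; simp
    · intro b _; simp
    · intro a _; rfl
  rw [← hsum]; exact h2 σ k

lemma lhs_zero {F : Type*} [Field F] {n : ℕ} (x : Fin n → F) (a b : Fin n) (hab : a ≠ b)
    (hx : x a = x b) :
    ∑ σ : Equiv.Perm (Fin n), ((Equiv.Perm.sign σ : ℤ) : F) *
      ∏ k : Fin n, (∑ i ∈ Finset.Iic k, x (σ i))⁻¹ = 0 := by
  have hswap : ∀ m, x (Equiv.swap a b m) = x m := by
    intro m
    rcases eq_or_ne m a with rfl | hma
    · rw [Equiv.swap_apply_left, hx.symm]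
    rcases eq_or_ne m b with rfl | hmb
    · rw [Equiv.swap_apply_right, hx]
    · rw [Equiv.swap_apply_of_ne_of_ne hma hmb]
  apply Finset.sum_ninvolution (fun σ => Equiv.swap a b * σ)
  · intro σ
    have hsgn : ((Equiv.Perm.sign (Equiv.swap a b * σ) : ℤ) : F)
        = -((Equiv.Perm.sign σ : ℤ) : F) := by
      rw [map_mul, Equiv.Perm.sign_swap hab]
      push_cast
      ring
    have hprod : ∏ k : Fin n, (∑ i ∈ Finset.Iic k, x ((Equiv.swap a b * σ) i))⁻¹
        = ∏ k : Fin n, (∑ i ∈ Finset.Iic k, x (σ i))⁻¹ := by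
      refine Finset.prod_congr rfl fun k _ => ?_
      congr 1
      exact Finset.sum_congr rfl fun i _ => by rw [Equiv.Perm.mul_apply, hswap]
    rw [hsgn, hprod]; ring
  · intro σ _
    intro heq
    nth_rewrite 2 [← one_mul σ] at heq
    exact hab (Equiv.swap_eq_one_iff.mp (mul_right_cancel heq))
  · intro σ; exact Finset.mem_univ _
  · intro σ; rw [← mul_assoc, Equiv.swap_mul_self, one_mul]

theorem key_identity {F : Type*} [Field F] (n : ℕ) :
    ∀ (x : Fin n → F), Function.Injective x → (∀ i, x i ≠ 0) →
      (∀ i j : Fin n, i ≠ j → x i + x j ≠ 0) →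
      (∀ S : Finset (Fin n), S.Nonempty → ∑ i ∈ S, x i ≠ 0) →
      ∑ σ : Equiv.Perm (Fin n), ((Equiv.Perm.sign σ : ℤ) : F) *
          ∏ k : Fin n, (∑ i ∈ Finset.Iic k, x (σ i))⁻¹
        = (∏ i : Fin n, (x i)⁻¹) *
            ∏ i : Fin n, ∏ j ∈ Finset.Ioi i, (x j - x i) / (x j + x i) := by
  induction n with
  | zero =>
      intro x _ _ _ _
      simp
  | succ n ih =>
      intro x hinj h0 h1 hS
      classical
      set S : F := ∑ i : Fin (n + 1), x i with hSdef
      have hSne : S ≠ 0 := by rw [hSdef]; exact hS Finset.univ Finset.univ_nonempty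
      set g : Fin (n + 1) → Fin (n + 1) → F := fun a b => (x b - x a) / (x b + x a) with hg
      set Px : F := ∏ i : Fin (n + 1), (x i)⁻¹ with hPx
      set Q : F := ∏ i : Fin (n + 1), ∏ k ∈ Finset.Ioi i, g i k with hQ
      have hre : ∑ σ : Equiv.Perm (Fin (n + 1)), ((Equiv.Perm.sign σ : ℤ) : F) *
            ∏ k : Fin (n + 1), (∑ i ∈ Finset.Iic k, x (σ i))⁻¹
          = ∑ p : Fin (n + 1) × Equiv.Perm (Fin n),
              ((Equiv.Perm.sign (pij p.1 * extLast p.2) : ℤ) : F) *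
              ∏ k : Fin (n + 1), (∑ i ∈ Finset.Iic k, x ((pij p.1 * extLast p.2) i))⁻¹ :=
        (Fintype.sum_bijective _ phi_bijective _ _ (fun p => rfl)).symm
      have hterm : ∀ (j : Fin (n + 1)) (τ : Equiv.Perm (Fin n)),
          ((Equiv.Perm.sign (pij j * extLast τ) : ℤ) : F) *
            ∏ k : Fin (n + 1), (∑ i ∈ Finset.Iic k, x ((pij j * extLast τ) i))⁻¹
          = ((-1 : F) ^ (n - (j : ℕ)) * S⁻¹) *
            (((Equiv.Perm.sign τ : ℤ) : F) *
              ∏ k : Fin n, (∑ i ∈ Finset.Iic k, x (j.succAbove (τ i)))⁻¹) := by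
        intro j τ
        have hsgn : ((Equiv.Perm.sign (pij j * extLast τ) : ℤ) : F)
            = (-1 : F) ^ (n - (j : ℕ)) * ((Equiv.Perm.sign τ : ℤ) : F) := by
          rw [map_mul, sign_pij, sign_extLast]
          push_cast
          ring
        have hprod : ∏ k : Fin (n + 1), (∑ i ∈ Finset.Iic k, x ((pij j * extLast τ) i))⁻¹
            = (∏ k : Fin n, (∑ i ∈ Finset.Iic k, x (j.succAbove (τ i)))⁻¹) * S⁻¹ := by
          rw [Fin.prod_univ_castSucc]
          congr 1
          · refine Finset.prod_congr rfl fun k _ => ?_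
            congr 1
            rw [Iic_castSucc_eq, Finset.sum_map]
            refine Finset.sum_congr rfl fun i _ => congrArg x ?_
            show (pij j) ((extLast τ) (Fin.castSucc i)) = j.succAbove (τ i)
            rw [extLast_castSucc, pij_castSucc]
          · rw [Iic_last_eq]
            congr 1
            rw [hSdef]
            exact Equiv.sum_comp _ x
        rw [hsgn, hprod]
        ring
      have hIH : ∀ j : Fin (n + 1),
          ∑ τ : Equiv.Perm (Fin n), ((Equiv.Perm.sign τ : ℤ) : F) *
              ∏ k : Fin n, (∑ i ∈ Finset.Iic k, x (j.succAbove (τ i)))⁻¹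
          = (∏ i : Fin n, (x (j.succAbove i))⁻¹) *
              ∏ i : Fin n, ∏ k ∈ Finset.Ioi i, g (j.succAbove i) (j.succAbove k) := by
        intro j
        exact ih (fun i => x (j.succAbove i))
          (fun a b hab => Fin.succAbove_right_injective (hinj hab))
          (fun i => h0 _)
          (fun a b hab => h1 _ _ (fun h => hab (Fin.succAbove_right_injective h)))
          (fun T hT => by
            simpa [Finset.sum_map] using
              hS (T.map j.succAboveEmb) (by simpa using hT))
      have ha : ∀ j : Fin (n + 1), ∏ i : Fin n, (x (j.succAbove i))⁻¹ = x j * Px := by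
        intro j
        have h := Fin.prod_univ_succAbove (fun i => (x i)⁻¹) j
        rw [hPx, h, ← mul_assoc, mul_inv_cancel₀ (h0 j), one_mul]
      have hb : ∀ j : Fin (n + 1),
          Q = (∏ a ∈ Finset.Iio j, g a j) * (∏ b ∈ Finset.Ioi j, g j b) *
              ∏ i : Fin n, ∏ k ∈ Finset.Ioi i, g (j.succAbove i) (j.succAbove k) := by
        intro j
        rw [hQ, Fin.prod_univ_succAbove (fun i => ∏ k ∈ Finset.Ioi i, g i k) j]
        have hin : ∀ i : Fin n, ∏ k ∈ Finset.Ioi (j.succAbove i), g (j.succAbove i) k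
            = (if j.succAbove i < j then g (j.succAbove i) j else 1) *
              ∏ k ∈ Finset.Ioi i, g (j.succAbove i) (j.succAbove k) := by
          intro i
          have hmap : ∏ k ∈ (Finset.Ioi (j.succAbove i)).erase j, g (j.succAbove i) k
              = ∏ k ∈ Finset.Ioi i, g (j.succAbove i) (j.succAbove k) := by
            rw [Ioi_succAbove_erase, Finset.prod_map]
            rfl
          by_cases hlt : j.succAbove i < j
          · rw [if_pos hlt, ← hmap, Finset.mul_prod_erase _ _ (Finset.mem_Ioi.mpr hlt)]
          · rw [if_neg hlt, one_mul, ← hmap,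
              Finset.erase_eq_of_notMem (fun hc => hlt (Finset.mem_Ioi.mp hc))]
        rw [Finset.prod_congr rfl (fun i _ => hin i), Finset.prod_mul_distrib]
        have hD1 : (∏ i : Fin n, if j.succAbove i < j then g (j.succAbove i) j else 1)
            = ∏ a ∈ Finset.Iio j, g a j := by
          have h := Fin.prod_univ_succAbove (fun a => if a < j then g a j else 1) j
          rw [if_neg (lt_irrefl j), one_mul] at h
          rw [← h, ← filter_lt_eq_Iio j, Finset.prod_filter]
        rw [hD1]
        ring
      have hc : ∀ j : Fin (n + 1),
          ((∏ a ∈ Finset.Iio j, g a j) * (∏ b ∈ Finset.Ioi j, g j b)) *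
            ∏ i ∈ Finset.univ.erase j, ((x j + x i) / (x j - x i))
          = (-1 : F) ^ (n - (j : ℕ)) := by
        intro j
        have hdisj : Disjoint (Finset.Iio j) (Finset.Ioi j) :=
          Finset.disjoint_left.mpr fun a ha hb =>
            lt_asymm (Finset.mem_Iio.mp ha) (Finset.mem_Ioi.mp hb)
        rw [erase_univ_eq, Finset.prod_union hdisj]
        have h1' : (∏ a ∈ Finset.Iio j, g a j) *
            ∏ a ∈ Finset.Iio j, ((x j + x a) / (x j - x a)) = 1 := by
          rw [← Finset.prod_mul_distrib]
          apply Finset.prod_eq_one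
          intro a ha
          have hne : a ≠ j := ne_of_lt (Finset.mem_Iio.mp ha)
          have hd1 : x j - x a ≠ 0 := fun h => hne (hinj (sub_eq_zero.mp h)).symm
          have hd2 : x j + x a ≠ 0 := h1 j a hne.symm
          simp only [hg]
          rw [div_mul_div_comm, div_eq_one_iff_eq (mul_ne_zero hd2 hd1)]
          ring
        have h2' : (∏ b ∈ Finset.Ioi j, g j b) *
            ∏ b ∈ Finset.Ioi j, ((x j + x b) / (x j - x b)) = (-1 : F) ^ (n - (j : ℕ)) := by
          rw [← Finset.prod_mul_distrib]
          have hfac : ∀ b ∈ Finset.Ioi j, g j b * ((x j + x b) / (x j - x b)) = -1 := by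
            intro b hb
            have hne : b ≠ j := (Finset.mem_Ioi.mp hb).ne'
            have hd1 : x j - x b ≠ 0 := fun h => hne (hinj (sub_eq_zero.mp h)).symm
            have hd2 : x b + x j ≠ 0 := h1 b j hne
            simp only [hg]
            rw [div_mul_div_comm, div_eq_iff (mul_ne_zero hd2 hd1)]
            ring
          rw [Finset.prod_congr rfl hfac, Finset.prod_const]
          congr 1
          rw [Fin.card_Ioi]
          omega
        calc ((∏ a ∈ Finset.Iio j, g a j) * ∏ b ∈ Finset.Ioi j, g j b) *
              ((∏ a ∈ Finset.Iio j, ((x j + x a) / (x j - x a))) *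
                ∏ b ∈ Finset.Ioi j, ((x j + x b) / (x j - x b)))
            = ((∏ a ∈ Finset.Iio j, g a j) *
                ∏ a ∈ Finset.Iio j, ((x j + x a) / (x j - x a))) *
              ((∏ b ∈ Finset.Ioi j, g j b) *
                ∏ b ∈ Finset.Ioi j, ((x j + x b) / (x j - x b))) := by ring
          _ = (-1 : F) ^ (n - (j : ℕ)) := by rw [h1', h2', one_mul]
      have hkey : ∀ j : Fin (n + 1),
          (-1 : F) ^ (n - (j : ℕ)) *
            ∏ i : Fin n, ∏ k ∈ Finset.Ioi i, g (j.succAbove i) (j.succAbove k)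
          = Q * ∏ i ∈ Finset.univ.erase j, ((x j + x i) / (x j - x i)) := by
        intro j
        rw [hb j, ← hc j]
        ring
      rw [hre, Fintype.sum_prod_type]
      have hrow : ∀ j : Fin (n + 1),
          ∑ τ : Equiv.Perm (Fin n),
            ((Equiv.Perm.sign (pij j * extLast τ) : ℤ) : F) *
              ∏ k : Fin (n + 1), (∑ i ∈ Finset.Iic k, x ((pij j * extLast τ) i))⁻¹
          = S⁻¹ * ((x j * ∏ i ∈ Finset.univ.erase j, ((x j + x i) / (x j - x i))) * (Px * Q)) := by
        intro j
        rw [Finset.sum_congr rfl (fun τ _ => hterm j τ), ← Finset.mul_sum, hIH j, ha j]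
        have := hkey j
        set G : F := ∏ i : Fin n, ∏ k ∈ Finset.Ioi i, g (j.succAbove i) (j.succAbove k)
        set E : F := ∏ i ∈ Finset.univ.erase j, ((x j + x i) / (x j - x i))
        linear_combination S⁻¹ * x j * Px * this
      rw [Finset.sum_congr rfl (fun j _ => hrow j), ← Finset.mul_sum]
      have hgoal : (∏ i : Fin (n + 1), (x i)⁻¹) *
          ∏ i : Fin (n + 1), ∏ k ∈ Finset.Ioi i, (x k - x i) / (x k + x i) = Px * Q := by
        rw [hPx, hQ]
      rw [hgoal]
      have hsum2 : ∑ j : Fin (n + 1),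
          (x j * ∏ i ∈ Finset.univ.erase j, ((x j + x i) / (x j - x i))) * (Px * Q)
          = S * (Px * Q) := by
        rw [← Finset.sum_mul, aux_sum x hinj h1, hSdef]
      rw [hsum2, ← mul_assoc, inv_mul_cancel₀ hSne, one_mul]

/-- The antisymmetrization identity
`∑_{σ∈Sₙ} ε(σ) R(x_{σ(1)},…,x_{σ(n)}) = ∏ᵢ (1/xᵢ) · ∏_{i<j} (xⱼ − xᵢ)/(xⱼ + xᵢ)`,
where `R(z₁,…,zₙ) = 1/(z₁(z₁+z₂)⋯(z₁+⋯+zₙ))`; the `xᵢ`, the sums `xᵢ + xⱼ` (`i < j`)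
and all partial sums `x_{σ(1)} + ⋯ + x_{σ(k)}` are assumed nonzero. -/
theorem antisymmetrized_R {F : Type*} [Field F] (n : ℕ) (x : Fin n → F)
    (h0 : ∀ i, x i ≠ 0)
    (h1 : ∀ i j : Fin n, i < j → x i + x j ≠ 0)
    (h2 : ∀ (σ : Equiv.Perm (Fin n)) (k : Fin n), ∑ i ∈ Finset.Iic k, x (σ i) ≠ 0) :
    ∑ σ : Equiv.Perm (Fin n), (Equiv.Perm.sign σ : ℤ) •
        ∏ k : Fin n, (∑ i ∈ Finset.Iic k, x (σ i))⁻¹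
      = (∏ i : Fin n, (x i)⁻¹) *
          ∏ i : Fin n, ∏ j ∈ Finset.Ioi i, (x j - x i) / (x j + x i) := by
  classical
  simp only [zsmul_eq_mul]
  by_cases hinj : Function.Injective x
  · exact key_identity n x hinj h0
      (fun i j hij => hij.lt_or_gt.elim (h1 i j) (fun h => by rw [add_comm]; exact h1 j i h))
      (subset_sum_ne x h2)
  · obtain ⟨a, b, hxab, hab⟩ : ∃ a b : Fin n, x a = x b ∧ a ≠ b := by
      simp only [Function.Injective] at hinj
      push_neg at hinj
      obtain ⟨a, b, h1', h2'⟩ := hinj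
      exact ⟨a, b, h1', h2'⟩
    rw [lhs_zero x a b hab hxab]
    symm
    rcases hab.lt_or_gt with h | h
    · apply mul_eq_zero_of_right
      apply Finset.prod_eq_zero (Finset.mem_univ a)
      apply Finset.prod_eq_zero (Finset.mem_Ioi.mpr h)
      rw [sub_eq_zero.mpr hxab.symm, zero_div]
    · apply mul_eq_zero_of_right
      apply Finset.prod_eq_zero (Finset.mem_univ b)
      apply Finset.prod_eq_zero (Finset.mem_Ioi.mpr h)
      rw [sub_eq_zero.mpr hxab, zero_div]
end

section
/- Minor summation formula for hyperpfaffians: for a skew-symmetric tensor A of order 2m in dimension 2mn, a 2mn×2mn matrix T, and t ≤ n, define Q_{i_1⋯i_{2m}} = ∑_{k_1<⋯<k_{2m}} a_{k_1⋯k_{2m}} det(T^{i_1⋯i_{2m}}_{k_1⋯k_{2m}}). Then ∑_{k_1<⋯<k_{2mt}} Pf^{[2m]}(A_{k_1⋯k_{2mt}}) · det(T^{1⋯2mt}_{k_1⋯k_{2mt}}) = Pf^{[2m]}(Q) (the hyperpfaffian of Q restricted to indices 1,…,2mt). -/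
/-- The index `2*p+j` of the `j`-th member of the `p`-th pair. -/
def pairIdx {n : ℕ} (p : Fin n) (j : Fin 2) : Fin (2 * n) :=
  ⟨2 * p.val + j.val, by have := p.isLt; have := j.isLt; omega⟩

/-- Permutations of `{1,…,2n}` encoding perfect matchings:
`σ(2p) < σ(2p+1)` and the first members are increasing. -/
def matchings (n : ℕ) : Finset (Equiv.Perm (Fin (2 * n))) :=
  Finset.univ.filter fun σ =>
    (∀ p : Fin n, σ (pairIdx p 0) < σ (pairIdx p 1)) ∧
    (∀ p q : Fin n, p < q → σ (pairIdx p 0) < σ (pairIdx q 0))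

/-- The Pfaffian of a `2n × 2n` antisymmetric matrix: signed sum over perfect matchings. -/
def pfaffian {K : Type*} [CommRing K] (n : ℕ) (A : Fin (2 * n) → Fin (2 * n) → K) : K :=
  ∑ σ ∈ matchings n, (Equiv.Perm.sign σ : ℤ) •
    ∏ p : Fin n, A (σ (pairIdx p 0)) (σ (pairIdx p 1))

/-- The hafnian of a `2n × 2n` symmetric matrix: unsigned sum over perfect matchings. -/
def hafnian {K : Type*} [CommRing K] (n : ℕ) (A : Fin (2 * n) → Fin (2 * n) → K) : K :=
  ∑ σ ∈ matchings n, ∏ p : Fin n, A (σ (pairIdx p 0)) (σ (pairIdx p 1))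

/-- The index `p*k + i` (member `i` of block `p`). -/
def blkIdx {n k : ℕ} (p : Fin n) (i : Fin k) : Fin (n * k) :=
  ⟨p.val * k + i.val, by
    have hp := p.isLt; have hi := i.isLt
    have h1 : p.val * k + i.val < (p.val + 1) * k := by rw [Nat.add_mul, Nat.one_mul]; omega
    have h2 : (p.val + 1) * k ≤ n * k := Nat.mul_le_mul_right k hp
    omega⟩

/-- `E_{nk,k}`: permutations increasing on each block of size `k`,
with increasing block minima. -/
def blockPerms (n k : ℕ) : Finset (Equiv.Perm (Fin (n * k))) :=
  Finset.univ.filter fun σ =>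
    (∀ (p : Fin n) (i j : Fin k), i < j → σ (blkIdx p i) < σ (blkIdx p j)) ∧
    (∀ p q : Fin n, p < q → ∀ i : Fin k, σ (blkIdx p ⟨0, i.pos⟩) < σ (blkIdx q ⟨0, i.pos⟩))

/-- The hyperpfaffian of an alternating tensor of order `k` in dimension `n*k`. -/
def hyperPf {K : Type*} [CommRing K] (n k : ℕ) (M : (Fin k → Fin (n * k)) → K) : K :=
  ∑ σ ∈ blockPerms n k, (Equiv.Perm.sign σ : ℤ) •
    ∏ p : Fin n, M fun i => σ (blkIdx p i)

/-- The hyperhafnian of a symmetric tensor of order `k` in dimension `n*k`. -/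
def hyperHf {K : Type*} [CommRing K] (n k : ℕ) (M : (Fin k → Fin (n * k)) → K) : K :=
  ∑ σ ∈ blockPerms n k, ∏ p : Fin n, M fun i => σ (blkIdx p i)


namespace MSF
open Finset Equiv Equiv.Perm

/-- block of an index -/
def blkOf {t k : ℕ} (x : Fin (t * k)) : Fin t :=
  ⟨x.val / k, by
    have hx := x.isLt
    have hk : 0 < k := by
      rcases Nat.eq_zero_or_pos k with h | h
      · subst h; omega
      · exact h
    exact (Nat.div_lt_iff_lt_mul hk).mpr (by omega)⟩

/-- position within the block -/
def posOf {t k : ℕ} (x : Fin (t * k)) : Fin k :=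
  ⟨x.val % k, by
    have hx := x.isLt
    have hk : 0 < k := by
      rcases Nat.eq_zero_or_pos k with h | h
      · subst h; omega
      · exact h
    exact Nat.mod_lt _ hk⟩

@[simp] theorem blkOf_blkIdx {t k : ℕ} (p : Fin t) (i : Fin k) : blkOf (blkIdx p i) = p := by
  have hk : 0 < k := i.pos
  ext
  simp only [blkOf, blkIdx]
  rw [Nat.mul_comm p.val k, Nat.mul_add_div hk, Nat.div_eq_of_lt i.isLt, Nat.add_zero]

@[simp] theorem posOf_blkIdx {t k : ℕ} (p : Fin t) (i : Fin k) : posOf (blkIdx p i) = i := by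
  ext
  simp only [posOf, blkIdx]
  rw [Nat.mul_comm p.val k, Nat.mul_add_mod, Nat.mod_eq_of_lt i.isLt]

@[simp] theorem blkIdx_blkOf_posOf {t k : ℕ} (x : Fin (t * k)) : blkIdx (blkOf x) (posOf x) = x := by
  ext
  simp only [blkIdx, blkOf, posOf]
  rw [Nat.mul_comm, Nat.div_add_mod]

theorem blkIdx_inj {t k : ℕ} {p q : Fin t} {i j : Fin k}
    (h : blkIdx p i = blkIdx q j) : p = q ∧ i = j := by
  constructor
  · have := congrArg blkOf h; simpa using this
  · have := congrArg posOf h; simpa using this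

/-- The equivalence `(p, i) ↦ blkIdx p i`. -/
def blkEquiv (t k : ℕ) : Fin t × Fin k ≃ Fin (t * k) where
  toFun x := blkIdx x.1 x.2
  invFun x := (blkOf x, posOf x)
  left_inv x := by simp
  right_inv x := by simp

/-- wreath-type permutation: permute the blocks by `ω` and inside block `p` by `ν p`. -/
def wPerm {t k : ℕ} (ω : Perm (Fin t)) (ν : Fin t → Perm (Fin k)) : Perm (Fin (t * k)) :=
  (blkEquiv t k).permCongr ((Equiv.prodCongrRight ν).trans (ω.prodCongr (Equiv.refl (Fin k))))

@[simp] theorem wPerm_apply {t k : ℕ} (ω : Perm (Fin t)) (ν : Fin t → Perm (Fin k))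
    (p : Fin t) (i : Fin k) : wPerm ω ν (blkIdx p i) = blkIdx (ω p) (ν p i) := by
  simp [wPerm, blkEquiv, Equiv.permCongr_apply, Equiv.prodCongrRight]

theorem ext_blk {t k : ℕ} {f g : Perm (Fin (t * k))}
    (h : ∀ (p : Fin t) (i : Fin k), f (blkIdx p i) = g (blkIdx p i)) : f = g := by
  ext x
  have hx : x = blkIdx (blkOf x) (posOf x) := (blkIdx_blkOf_posOf x).symm
  rw [hx, h]

theorem wPerm_inv {t k : ℕ} (ω : Perm (Fin t)) (ν : Fin t → Perm (Fin k)) :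
    (wPerm ω ν)⁻¹ = wPerm ω⁻¹ (fun p => (ν (ω⁻¹ p))⁻¹) := by
  rw [eq_comm, eq_inv_iff_mul_eq_one]
  apply ext_blk (k := k)
  intro p i
  simp [Equiv.Perm.mul_apply]

theorem sign_wPerm {t k : ℕ} (hk : Even k) (ω : Perm (Fin t)) (ν : Fin t → Perm (Fin k)) :
    Equiv.Perm.sign (wPerm ω ν) = ∏ p : Fin t, Equiv.Perm.sign (ν p) := by
  have h1 : ((Equiv.prodCongrRight ν).trans (ω.prodCongr (Equiv.refl (Fin k))))
      = (ω.prodCongr (Equiv.refl (Fin k))) * (Equiv.prodCongrRight ν) := rfl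
  rw [wPerm, Equiv.Perm.sign_permCongr, h1, map_mul]
  have h2 : ω.prodCongr (Equiv.refl (Fin k)) = Equiv.prodCongrLeft (fun _ => ω) := by
    ext x <;> simp [Equiv.prodCongrLeft]
  rw [h2, Equiv.Perm.sign_prodCongrLeft, Equiv.Perm.sign_prodCongrRight]
  have : (∏ _i : Fin k, Equiv.Perm.sign ω) = (Equiv.Perm.sign ω) ^ k := by
    simp [Finset.prod_const]
  rw [this]
  obtain ⟨r, hr⟩ := hk
  have : (Equiv.Perm.sign ω) ^ k = 1 := by
    rw [hr, ← two_mul, pow_mul]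
    simp
  rw [this, one_mul]

theorem wPerm_mul {t k : ℕ} (ω ω' : Perm (Fin t)) (ν ν' : Fin t → Perm (Fin k)) :
    wPerm ω ν * wPerm ω' ν' = wPerm (ω * ω') (fun p => ν (ω' p) * ν' p) := by
  apply ext_blk (k := k)
  intro p i
  simp [Equiv.Perm.mul_apply]



variable {t k : ℕ}

theorem blkIdx_injective (p : Fin t) : Function.Injective (fun i : Fin k => blkIdx p i) :=
  fun i j h => (blkIdx_inj h).2

/-- the `p`-th block of `θ` as a tuple -/
def gBlk (θ : Perm (Fin (t * k))) (p : Fin t) : Fin k → Fin (t * k) :=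
  fun i => θ (blkIdx p i)

theorem gBlk_injective (θ : Perm (Fin (t * k))) (p : Fin t) : Function.Injective (gBlk θ p) :=
  fun i j h => (blkIdx_inj (θ.injective h)).2

/-- the `p`-th block of `θ`, sorted increasingly -/
def sBlk (θ : Perm (Fin (t * k))) (p : Fin t) : Fin k → Fin (t * k) :=
  gBlk θ p ∘ Tuple.sort (gBlk θ p)

theorem sBlk_strictMono (θ : Perm (Fin (t * k))) (p : Fin t) : StrictMono (sBlk θ p) :=
  (Tuple.monotone_sort (gBlk θ p)).strictMono_of_injective
    ((gBlk_injective θ p).comp (Tuple.sort (gBlk θ p)).injective)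

theorem sBlk_apply (θ : Perm (Fin (t * k))) (p : Fin t) (i : Fin k) :
    sBlk θ p i = θ (blkIdx p (Tuple.sort (gBlk θ p) i)) := rfl

/-- minima of the sorted blocks -/
def mins (hk : 0 < k) (θ : Perm (Fin (t * k))) : Fin t → Fin (t * k) :=
  fun p => sBlk θ p ⟨0, hk⟩

theorem mins_injective (hk : 0 < k) (θ : Perm (Fin (t * k))) :
    Function.Injective (mins hk θ) := by
  intro p q h
  simp only [mins, sBlk_apply] at h
  exact (blkIdx_inj (θ.injective h)).1

/-- the block-sorting permutation -/
def bSort (hk : 0 < k) (θ : Perm (Fin (t * k))) : Perm (Fin t) :=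
  Tuple.sort (mins hk θ)

theorem mins_comp_bSort_strictMono (hk : 0 < k) (θ : Perm (Fin (t * k))) :
    StrictMono (mins hk θ ∘ bSort hk θ) :=
  (Tuple.monotone_sort (mins hk θ)).strictMono_of_injective
    ((mins_injective hk θ).comp (bSort hk θ).injective)

/-- the sorted representative of `θ` in `E = blockPerms` -/
noncomputable def sortE (hk : 0 < k) (θ : Perm (Fin (t * k))) : Perm (Fin (t * k)) :=
  Equiv.ofBijective (fun x => sBlk θ (bSort hk θ (blkOf x)) (posOf x)) (by
    rw [← Finite.injective_iff_bijective]
    intro x y h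
    simp only [sBlk_apply] at h
    obtain ⟨h1, h2⟩ := blkIdx_inj (θ.injective h)
    have hb : blkOf x = blkOf y := (bSort hk θ).injective h1
    have hp : posOf x = posOf y :=
      (Tuple.sort (gBlk θ (bSort hk θ (blkOf y)))).injective (by rw [← hb] at h2 ⊢; exact h2)
    rw [← blkIdx_blkOf_posOf x, ← blkIdx_blkOf_posOf y, hb, hp])

theorem sortE_apply (hk : 0 < k) (θ : Perm (Fin (t * k))) (p : Fin t) (i : Fin k) :
    sortE hk θ (blkIdx p i) = sBlk θ (bSort hk θ p) i := by
  simp [sortE, Equiv.ofBijective]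

theorem mem_blockPerms {σ : Perm (Fin (t * k))} :
    σ ∈ blockPerms t k ↔
      (∀ (p : Fin t) (i j : Fin k), i < j → σ (blkIdx p i) < σ (blkIdx p j)) ∧
      (∀ p q : Fin t, p < q → ∀ i : Fin k, σ (blkIdx p ⟨0, i.pos⟩) < σ (blkIdx q ⟨0, i.pos⟩)) := by
  simp [blockPerms]

theorem sortE_mem (hk : 0 < k) (θ : Perm (Fin (t * k))) : sortE hk θ ∈ blockPerms t k := by
  rw [mem_blockPerms]
  constructor
  · intro p i j hij
    rw [sortE_apply, sortE_apply]
    exact sBlk_strictMono θ _ hij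
  · intro p q hpq i
    rw [sortE_apply, sortE_apply]
    have : ∀ r : Fin t, sBlk θ (bSort hk θ r) ⟨0, i.pos⟩ = (mins hk θ ∘ bSort hk θ) r := by
      intro r; rfl
    rw [this p, this q]
    exact mins_comp_bSort_strictMono hk θ hpq

theorem sortE_spec (hk : 0 < k) (θ : Perm (Fin (t * k))) :
    θ = sortE hk θ * wPerm (bSort hk θ)⁻¹ (fun p => (Tuple.sort (gBlk θ p))⁻¹) := by
  apply ext_blk (k := k)
  intro p i
  rw [Equiv.Perm.mul_apply, wPerm_apply, sortE_apply, sBlk_apply]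
  simp [gBlk]

theorem sortE_of_mem (hk : 0 < k) {σ : Perm (Fin (t * k))} (hσ : σ ∈ blockPerms t k) :
    sortE hk σ = σ := by
  rw [mem_blockPerms] at hσ
  have hg : ∀ p, StrictMono (gBlk σ p) := fun p i j hij => hσ.1 p i j hij
  have hsort : ∀ p, Tuple.sort (gBlk σ p) = Equiv.refl _ := fun p =>
    Tuple.sort_eq_refl_iff_monotone.mpr (hg p).monotone
  have hsb : ∀ p, sBlk σ p = gBlk σ p := by
    intro p; funext i; rw [sBlk_apply, hsort p]; rfl
  have hmins : StrictMono (mins hk σ) := by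
    intro p q hpq
    show sBlk σ p ⟨0, hk⟩ < sBlk σ q ⟨0, hk⟩
    rw [hsb p, hsb q]
    exact hσ.2 p q hpq ⟨0, hk⟩
  have hb : bSort hk σ = Equiv.refl _ :=
    Tuple.sort_eq_refl_iff_monotone.mpr hmins.monotone
  apply ext_blk (k := k)
  intro p i
  rw [sortE_apply, hb]
  show sBlk σ p i = _
  rw [hsb p]; rfl

theorem sortE_mul_wPerm (hk : 0 < k) (θ : Perm (Fin (t * k)))
    (ω : Perm (Fin t)) (ν : Fin t → Perm (Fin k)) :
    sortE hk (θ * wPerm ω ν) = sortE hk θ := by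
  have hg : ∀ p, gBlk (θ * wPerm ω ν) p = gBlk θ (ω p) ∘ (ν p) := by
    intro p; funext i
    simp [gBlk, Equiv.Perm.mul_apply]
  have hsb : ∀ p, sBlk (θ * wPerm ω ν) p = sBlk θ (ω p) := by
    intro p
    show gBlk (θ * wPerm ω ν) p ∘ Tuple.sort (gBlk (θ * wPerm ω ν) p) = _
    rw [hg p]
    exact Tuple.comp_perm_comp_sort_eq_comp_sort
  have hmins : mins hk (θ * wPerm ω ν) = mins hk θ ∘ ω := by
    funext p
    show sBlk (θ * wPerm ω ν) p ⟨0, hk⟩ = sBlk θ (ω p) ⟨0, hk⟩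
    rw [hsb p]
  have hkey : ∀ p, ω (bSort hk (θ * wPerm ω ν) p) = bSort hk θ p := by
    have h1 : Monotone (mins hk θ ∘ ⇑(ω * bSort hk (θ * wPerm ω ν))) := by
      have he : mins hk θ ∘ ⇑(ω * bSort hk (θ * wPerm ω ν))
          = (mins hk (θ * wPerm ω ν)) ∘ ⇑(bSort hk (θ * wPerm ω ν)) := by
        funext p
        simp [Equiv.Perm.mul_apply, hmins]
      rw [he]
      exact Tuple.monotone_sort _
    have h2 : Monotone (mins hk θ ∘ ⇑(bSort hk θ)) := Tuple.monotone_sort _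
    have := Tuple.unique_monotone h1 h2
    intro p
    have := congrFun this p
    exact mins_injective hk θ this
  apply ext_blk (k := k)
  intro p i
  rw [sortE_apply, sortE_apply, hsb, hkey]

variable {K : Type*} [CommRing K]

/-- sign as a ring element -/
def eps {α : Type*} [DecidableEq α] [Fintype α] (σ : Perm α) : K :=
  ((Equiv.Perm.sign σ : ℤ) : K)

theorem eps_mul {α : Type*} [DecidableEq α] [Fintype α] (σ τ : Perm α) :
    (eps (σ * τ) : K) = eps σ * eps τ := by
  simp [eps]

theorem eps_sq {α : Type*} [DecidableEq α] [Fintype α] (σ : Perm α) :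
    (eps σ : K) * eps σ = 1 := by
  simp [eps, ← Int.cast_mul, ← Units.val_mul]

theorem smul_eq_eps_mul {α : Type*} [DecidableEq α] [Fintype α] (σ : Perm α) (a : K) :
    (Equiv.Perm.sign σ : ℤ) • a = (eps σ : K) * a := by
  rw [zsmul_eq_mul]; rfl

theorem eps_wPerm {t k : ℕ} (hke : Even k) (ω : Perm (Fin t)) (ν : Fin t → Perm (Fin k)) :
    (eps (wPerm ω ν) : K) = ∏ p : Fin t, eps (ν p) := by
  rw [eps, sign_wPerm hke]
  push_cast
  rfl

/-- sorting an injective tuple: sum over (increasing, perm) pairs equals sum over injective. -/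
theorem sum_inc_perm {r N : ℕ} (F : (Fin r → Fin N) → K) :
    (∑ κ ∈ Finset.univ.filter (fun κ : Fin r → Fin N => ∀ i j, i < j → κ i < κ j),
      ∑ τ : Perm (Fin r), F (κ ∘ τ))
    = ∑ g ∈ Finset.univ.filter (fun g : Fin r → Fin N => Function.Injective g), F g := by
  rw [← Finset.sum_product']
  refine Finset.sum_nbij' (fun x => x.1 ∘ x.2) (fun g => (g ∘ Tuple.sort g, (Tuple.sort g)⁻¹))
    ?_ ?_ ?_ ?_ ?_
  · rintro ⟨κ, τ⟩ hx
    rw [Finset.mem_product, Finset.mem_filter] at hx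
    have hmono : StrictMono κ := fun i j hij => hx.1.2 i j hij
    simp only [Finset.mem_filter, Finset.mem_univ, true_and]
    exact hmono.injective.comp τ.injective
  · intro g hg
    rw [Finset.mem_filter] at hg
    rw [Finset.mem_product, Finset.mem_filter]
    refine ⟨⟨Finset.mem_univ _, ?_⟩, Finset.mem_univ _⟩
    intro i j hij
    exact ((Tuple.monotone_sort g).strictMono_of_injective
      (hg.2.comp (Tuple.sort g).injective)) hij
  · rintro ⟨κ, τ⟩ hx
    rw [Finset.mem_product, Finset.mem_filter] at hx
    have hmono : StrictMono κ := fun i j hij => hx.1.2 i j hij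
    have hinj : Function.Injective (κ ∘ τ) := hmono.injective.comp τ.injective
    have h1 : (κ ∘ τ) ∘ (Tuple.sort (κ ∘ τ)) = (κ ∘ τ) ∘ ⇑τ⁻¹ := by
      apply Tuple.unique_monotone (Tuple.monotone_sort _)
      have : (κ ∘ ⇑τ) ∘ ⇑τ⁻¹ = κ := by
        funext z; simp
      rw [this]
      exact hmono.monotone
    have hsort : Tuple.sort (κ ∘ τ) = τ⁻¹ := by
      apply Equiv.ext
      intro z
      exact hinj (congrFun h1 z)
    have h2 : (κ ∘ ⇑τ) ∘ ⇑τ⁻¹ = κ := by funext z; simp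
    simp only [Prod.mk.injEq]
    exact ⟨by rw [hsort, h2], by rw [hsort, inv_inv]⟩
  · intro g hg
    funext z
    simp
  · rintro ⟨κ, τ⟩ _
    rfl

/-- determinant as a sum over permutations acting on columns -/
theorem det_expand {r M : ℕ} (Row : Fin r → Fin M → K) (g : Fin r → Fin M) :
    Matrix.det (Matrix.of fun i j => Row i (g j))
      = ∑ τ : Perm (Fin r), (eps τ : K) * ∏ x, Row x (g (τ x)) := by
  rw [← Matrix.det_transpose, Matrix.det_apply']
  refine Finset.sum_congr rfl (fun τ _ => ?_)
  rfl

section main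
variable {t k N : ℕ} (hk : 0 < k) (hke : Even k)
variable (A : (Fin k → Fin N) → K)
variable (h : Fin (t * k) → Fin N)

/-- the product of `A` over the blocks of `θ`, transported by `h` -/
def Pr (θ : Perm (Fin (t * k))) : K :=
  ∏ p : Fin t, A (fun i => h (θ (blkIdx p i)))

variable (hA : ∀ (s : Fin k → Fin N) (σ : Perm (Fin k)),
  A (s ∘ σ) = (Equiv.Perm.sign σ : ℤ) • A s)

include hA in
theorem Pr_mul_wPerm (θ : Perm (Fin (t * k))) (ω : Perm (Fin t)) (ν : Fin t → Perm (Fin k)) :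
    Pr A h (θ * wPerm ω ν) = (∏ p : Fin t, (eps (ν p) : K)) * Pr A h θ := by
  unfold Pr
  have step : ∀ p : Fin t, A (fun i => h ((θ * wPerm ω ν) (blkIdx p i)))
      = eps (ν p) * A (fun i => h (θ (blkIdx (ω p) i))) := by
    intro p
    have : (fun i => h ((θ * wPerm ω ν) (blkIdx p i)))
        = (fun i => h (θ (blkIdx (ω p) i))) ∘ (ν p) := by
      funext i
      simp [Equiv.Perm.mul_apply]
    rw [this, hA, smul_eq_eps_mul]
  calc ∏ p : Fin t, A (fun i => h ((θ * wPerm ω ν) (blkIdx p i)))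
      = ∏ p : Fin t, (eps (ν p) * A (fun i => h (θ (blkIdx (ω p) i)))) := by
        exact Finset.prod_congr rfl (fun p _ => step p)
    _ = (∏ p : Fin t, (eps (ν p) : K)) * ∏ p : Fin t, A (fun i => h (θ (blkIdx (ω p) i))) :=
        Finset.prod_mul_distrib
    _ = (∏ p : Fin t, (eps (ν p) : K)) * ∏ p : Fin t, A (fun i => h (θ (blkIdx p i))) := by
        rw [Equiv.prod_comp ω (fun p => A (fun i => h (θ (blkIdx p i))))]

include hA hke in
/-- Key identity: a term indexed by any permutation equals the term of its sorted form. -/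
theorem key_identity (θ : Perm (Fin (t * k))) :
    (eps θ : K) * Pr A h θ = eps (sortE hk θ) * Pr A h (sortE hk θ) := by
  have hspec := sortE_spec hk θ
  set w := wPerm (bSort hk θ)⁻¹ (fun p => (Tuple.sort (gBlk θ p))⁻¹) with hw
  have h1 : Pr A h θ = (∏ p : Fin t, (eps ((Tuple.sort (gBlk θ p))⁻¹) : K)) * Pr A h (sortE hk θ) := by
    conv_lhs => rw [hspec]
    exact Pr_mul_wPerm A h hA _ _ _
  have h2 : (eps θ : K) = eps (sortE hk θ) * ∏ p : Fin t, (eps ((Tuple.sort (gBlk θ p))⁻¹) : K) := by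
    conv_lhs => rw [hspec]
    rw [eps_mul, eps_wPerm hke]
  rw [h1, h2]
  have h3 : (∏ p : Fin t, (eps ((Tuple.sort (gBlk θ p))⁻¹) : K)) ^ 2 = 1 := by
    rw [← Finset.prod_pow]
    apply Finset.prod_eq_one
    intro p _
    rw [sq]
    exact eps_sq _
  ring_nf
  rw [h3, mul_one]

/-- the full signed sum over block permutations -/
def FF : K :=
  ∑ σ ∈ blockPerms t k, (eps σ : K) * Pr A h σ

include hA hke hk in
theorem FF_comp (ρ : Perm (Fin (t * k))) :
    FF A (h ∘ ρ) = (eps ρ : K) * FF A h := by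
  unfold FF
  rw [Finset.mul_sum]
  refine Finset.sum_nbij' (fun σ => sortE hk (ρ * σ)) (fun σ => sortE hk (ρ⁻¹ * σ))
    (fun σ _ => sortE_mem hk _) (fun σ _ => sortE_mem hk _) ?_ ?_ ?_
  · intro σ hσ
    have hs := sortE_spec hk (ρ * σ)
    set w := wPerm (bSort hk (ρ * σ))⁻¹ (fun p => (Tuple.sort (gBlk (ρ * σ) p))⁻¹) with hw
    have h2 : ρ⁻¹ * sortE hk (ρ * σ) = σ * w⁻¹ := by
      have h3 : sortE hk (ρ * σ) = (ρ * σ) * w⁻¹ := eq_mul_inv_iff_mul_eq.mpr hs.symm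
      rw [h3]; group
    show sortE hk (ρ⁻¹ * sortE hk (ρ * σ)) = σ
    rw [h2, hw, wPerm_inv, sortE_mul_wPerm, sortE_of_mem hk hσ]
  · intro σ hσ
    have hs := sortE_spec hk (ρ⁻¹ * σ)
    set w := wPerm (bSort hk (ρ⁻¹ * σ))⁻¹ (fun p => (Tuple.sort (gBlk (ρ⁻¹ * σ) p))⁻¹) with hw
    have h2 : ρ * sortE hk (ρ⁻¹ * σ) = σ * w⁻¹ := by
      have h3 : sortE hk (ρ⁻¹ * σ) = (ρ⁻¹ * σ) * w⁻¹ := eq_mul_inv_iff_mul_eq.mpr hs.symm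
      rw [h3]; group
    show sortE hk (ρ * sortE hk (ρ⁻¹ * σ)) = σ
    rw [h2, hw, wPerm_inv, sortE_mul_wPerm, sortE_of_mem hk hσ]
  · intro σ hσ
    have hP : Pr A (h ∘ ρ) σ = Pr A h (ρ * σ) := rfl
    have he : (eps σ : K) = eps ρ * eps (ρ * σ) := by
      rw [eps_mul, ← mul_assoc, eps_sq, one_mul]
    rw [hP, he, mul_assoc, key_identity hk hke A h hA (ρ * σ)]

include hA hke hk in
theorem cancel_noninj (hk2 : 2 ≤ k) (hninj : ¬ Function.Injective h) :
    ∑ σ ∈ (blockPerms t k).filter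
        (fun σ => ∀ p : Fin t, Function.Injective (fun i => h (σ (blkIdx p i)))),
      (eps σ : K) * Pr A h σ = 0 := by
  simp only [Function.Injective, not_forall] at hninj
  obtain ⟨x, y, hxy, hne⟩ := hninj
  have hswap : ∀ z, h (Equiv.swap x y z) = h z := by
    intro z
    rcases eq_or_ne z x with rfl | hzx
    · rw [Equiv.swap_apply_left]; exact hxy.symm
    rcases eq_or_ne z y with rfl | hzy
    · rw [Equiv.swap_apply_right]; exact hxy
    · rw [Equiv.swap_apply_of_ne_of_ne hzx hzy]
  apply Finset.sum_involution (fun σ _ => sortE hk (Equiv.swap x y * σ))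
  · -- f σ + f (Φ σ) = 0
    intro σ hσ
    have hki := (key_identity hk hke A h hA (Equiv.swap x y * σ)).symm
    have he : (eps (Equiv.swap x y * σ) : K) = - eps σ := by
      rw [eps_mul]
      have : (eps (Equiv.swap x y) : K) = -1 := by
        simp [eps, Equiv.Perm.sign_swap hne]
      rw [this]; ring
    have hP : Pr A h (Equiv.swap x y * σ) = Pr A h σ := by
      unfold Pr
      refine Finset.prod_congr rfl (fun p _ => ?_)
      exact congrArg A (funext fun i => hswap _)
    rw [hki, he, hP]
    ring
  · -- Φ σ ≠ σ
    intro σ hσ _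
    rw [Finset.mem_filter] at hσ
    obtain ⟨hσE, hσI⟩ := hσ
    intro heq
    have hs := sortE_spec hk (Equiv.swap x y * σ)
    set ω' := (bSort hk (Equiv.swap x y * σ))⁻¹ with hω'
    set ν' := (fun p => (Tuple.sort (gBlk (Equiv.swap x y * σ) p))⁻¹) with hν'
    rw [heq] at hs
    -- hs : swap x y * σ = σ * wPerm ω' ν'
    set p := blkOf (σ⁻¹ x) with hp
    set i := posOf (σ⁻¹ x) with hi
    set q := blkOf (σ⁻¹ y) with hq
    set j := posOf (σ⁻¹ y) with hj
    have hbx : blkIdx p i = σ⁻¹ x := blkIdx_blkOf_posOf _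
    have hby : blkIdx q j = σ⁻¹ y := blkIdx_blkOf_posOf _
    have hpq : p ≠ q := by
      intro hpq
      apply hne
      have hinj := hσI p
      have h1 : h (σ (blkIdx p i)) = h (σ (blkIdx p j)) := by
        rw [hbx, hpq, hby]
        simp [hxy]
      have hij : i = j := hinj h1
      have hxx : σ⁻¹ x = σ⁻¹ y := by rw [← hbx, ← hby, hij, hpq]
      calc x = σ (σ⁻¹ x) := by simp
        _ = σ (σ⁻¹ y) := by rw [hxx]
        _ = y := by simp
    have hx1 : σ (blkIdx p i) = x := by rw [hbx]; simp
    have hy1 : σ (blkIdx q j) = y := by rw [hby]; simp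
    have heval : ∀ z, Equiv.swap x y (σ z) = σ (wPerm ω' ν' z) := by
      intro z
      have := congrFun (congrArg (fun (e : Perm (Fin (t*k))) => (e : Fin (t*k) → Fin (t*k))) hs) z
      simpa [Equiv.Perm.mul_apply] using this
    have h1 := heval (blkIdx p i)
    rw [hx1, Equiv.swap_apply_left, wPerm_apply, ← hy1] at h1
    have h2 := blkIdx_inj (σ.injective h1.symm)
    -- h2 : ω' p = q ∧ ...
    obtain ⟨i₂, hi₂⟩ : ∃ i₂ : Fin k, i₂ ≠ i := by
      rcases eq_or_ne i ⟨0, hk⟩ with h0 | h0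
      · exact ⟨⟨1, hk2⟩, by rw [h0]; intro hcon; exact absurd (congrArg Fin.val hcon) (by simp)⟩
      · exact ⟨⟨0, hk⟩, Ne.symm h0⟩
    have h3 := heval (blkIdx p i₂)
    have hne1 : σ (blkIdx p i₂) ≠ x := by
      intro hcon
      have : blkIdx p i₂ = σ⁻¹ x := by
        rw [← hcon]; simp
      rw [← hbx] at this
      exact hi₂ (blkIdx_inj this).2
    have hne2 : σ (blkIdx p i₂) ≠ y := by
      intro hcon
      have : blkIdx p i₂ = σ⁻¹ y := by
        rw [← hcon]; simp
      rw [← hby] at this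
      exact hpq (blkIdx_inj this).1
    rw [Equiv.swap_apply_of_ne_of_ne hne1 hne2, wPerm_apply] at h3
    have h4 := blkIdx_inj (σ.injective h3)
    exact hpq (h4.1.trans h2.1)
  · -- involution
    intro σ hσ
    show sortE hk (Equiv.swap x y * sortE hk (Equiv.swap x y * σ)) = σ
    rw [Finset.mem_filter] at hσ
    have hs := sortE_spec hk (Equiv.swap x y * σ)
    set w := wPerm (bSort hk (Equiv.swap x y * σ))⁻¹
      (fun p => (Tuple.sort (gBlk (Equiv.swap x y * σ) p))⁻¹) with hw
    have hΦ : sortE hk (Equiv.swap x y * σ) = (Equiv.swap x y * σ) * w⁻¹ :=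
      eq_mul_inv_iff_mul_eq.mpr hs.symm
    have : Equiv.swap x y * sortE hk (Equiv.swap x y * σ) = σ * w⁻¹ := by
      rw [hΦ, ← mul_assoc, ← mul_assoc, Equiv.swap_mul_self, one_mul]
    rw [this, hw, wPerm_inv, sortE_mul_wPerm, sortE_of_mem hk hσ.1]

  · -- membership
    intro σ hσ
    show sortE hk (Equiv.swap x y * σ) ∈ (blockPerms t k).filter
        (fun σ => ∀ p : Fin t, Function.Injective (fun i => h (σ (blkIdx p i))))
    rw [Finset.mem_filter] at hσ ⊢
    obtain ⟨hσE, hσI⟩ := hσ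
    refine ⟨sortE_mem hk _, ?_⟩
    have hs := sortE_spec hk (Equiv.swap x y * σ)
    set b := (bSort hk (Equiv.swap x y * σ))⁻¹ with hb
    set ν := (fun p => (Tuple.sort (gBlk (Equiv.swap x y * σ) p))⁻¹) with hν
    have hΦ : sortE hk (Equiv.swap x y * σ) = (Equiv.swap x y * σ) * (wPerm b ν)⁻¹ :=
      eq_mul_inv_iff_mul_eq.mpr hs.symm
    rw [hΦ, wPerm_inv]
    intro p i1 i2 h12
    simp only [Equiv.Perm.mul_apply, wPerm_apply, hswap] at h12
    exact (Equiv.injective _) (hσI (b⁻¹ p) h12)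
end main

section assemble
variable {t k N : ℕ} (hk : 0 < k) (hke : Even k)
variable (A : (Fin k → Fin N) → K)
variable (B : Fin (t * k) → Fin N → K)
variable (hA : ∀ (s : Fin k → Fin N) (σ : Perm (Fin k)),
  A (s ∘ σ) = (Equiv.Perm.sign σ : ℤ) • A s)

/-- weight of a column selection -/
def Wt (h : Fin (t * k) → Fin N) : K := ∏ x, B x (h x)

include hA in
theorem Q_expand (u : Fin k → Fin (t * k)) :
    (∑ κ ∈ Finset.univ.filter (fun κ : Fin k → Fin N => ∀ i j, i < j → κ i < κ j),
      A κ * Matrix.det (Matrix.of fun i j => B (u i) (κ j)))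
    = ∑ g ∈ Finset.univ.filter (fun g : Fin k → Fin N => Function.Injective g),
        A g * ∏ i, B (u i) (g i) := by
  rw [← sum_inc_perm (fun g => A g * ∏ i, B (u i) (g i))]
  refine Finset.sum_congr rfl fun κ hκ => ?_
  rw [det_expand (fun i m => B (u i) m) κ, Finset.mul_sum]
  refine Finset.sum_congr rfl fun τ _ => ?_
  have hAκ : A (κ ∘ τ) = (eps τ : K) * A κ := by rw [hA, smul_eq_eps_mul]
  show A κ * ((eps τ : K) * ∏ x, B (u x) (κ (τ x))) = A (κ ∘ τ) * ∏ i, B (u i) (κ (τ i))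
  rw [hAκ]; ring

theorem prod_blocks (f : Fin (t * k) → K) (σ : Perm (Fin (t * k))) :
    ∏ p : Fin t, ∏ i : Fin k, f (σ (blkIdx p i)) = ∏ x, f x := by
  have h1 : ∏ p : Fin t, ∏ i : Fin k, f (σ (blkIdx p i))
      = ∏ y : Fin t × Fin k, f (σ (blkIdx y.1 y.2)) :=
    (Fintype.prod_prod_type (fun y : Fin t × Fin k => f (σ (blkIdx y.1 y.2)))).symm
  rw [h1]
  exact Equiv.prod_comp ((blkEquiv t k).trans σ) f

/-- regroup the product of sums over one permutation's blocks -/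
theorem R_sigma (σ : Perm (Fin (t * k))) :
    (∑ G ∈ Fintype.piFinset (fun _ : Fin t =>
        Finset.univ.filter (fun g : Fin k → Fin N => Function.Injective g)),
      ∏ p : Fin t, (A (G p) * ∏ i, B (σ (blkIdx p i)) (G p i)))
    = ∑ h ∈ Finset.univ.filter
        (fun h : Fin (t * k) → Fin N =>
          ∀ p : Fin t, Function.Injective (fun i => h (σ (blkIdx p i)))),
        Pr A h σ * Wt B h := by
  refine Finset.sum_nbij' (fun G => fun x => G (blkOf (σ⁻¹ x)) (posOf (σ⁻¹ x)))
    (fun h => fun p i => h (σ (blkIdx p i))) ?_ ?_ ?_ ?_ ?_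
  · intro G hG
    rw [Fintype.mem_piFinset] at hG
    simp only [Finset.mem_filter, Finset.mem_univ, true_and]
    intro p i1 i2 h12
    simp only [Equiv.Perm.inv_def, Equiv.symm_apply_apply, blkOf_blkIdx, posOf_blkIdx] at h12
    have := (Finset.mem_filter.mp (hG p)).2
    exact this h12
  · intro h hh
    rw [Finset.mem_filter] at hh
    rw [Fintype.mem_piFinset]
    intro p
    simp only [Finset.mem_filter, Finset.mem_univ, true_and]
    exact hh.2 p
  · intro G hG
    funext p i
    simp
  · intro h hh
    funext x
    simp
  · intro G hG
    rw [Finset.prod_mul_distrib]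
    congr 1
    · unfold Pr
      refine Finset.prod_congr rfl fun p _ => ?_
      congr 1
      funext i
      simp
    · show (∏ p : Fin t, ∏ i : Fin k, B (σ (blkIdx p i)) (G p i))
          = Wt B (fun x => G (blkOf (σ⁻¹ x)) (posOf (σ⁻¹ x)))
      rw [Wt, ← prod_blocks (fun x => B x (G (blkOf (σ⁻¹ x)) (posOf (σ⁻¹ x)))) σ]
      refine Finset.prod_congr rfl fun p _ => Finset.prod_congr rfl fun i _ => ?_
      simp

end assemble

end MSF

/-- **Minor summation formula for hyperpfaffians**: for a skew-symmetric tensor `A` of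
order `2m` in dimension `2mn`, a `2mn × 2mn` matrix `T` and `t ≤ n`, with
`Q_{i₁⋯i_{2m}} = ∑_{k₁<⋯<k_{2m}} a_{k₁⋯k_{2m}} det(T^{i₁⋯i_{2m}}_{k₁⋯k_{2m}})`, one has
`∑_{k₁<⋯<k_{2mt}} Pf^{[2m]}(A_{k₁⋯k_{2mt}}) · det(T^{1⋯2mt}_{k₁⋯k_{2mt}})
  = Pf^{[2m]}(Q)` (hyperpfaffian of `Q` restricted to the indices `1,…,2mt`). -/
theorem minor_summation_hyperpfaffian {K : Type*} [CommRing K] (m n t : ℕ) (ht : t ≤ n)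
    (A : (Fin (2 * m) → Fin (n * (2 * m))) → K)
    (hA : ∀ (s : Fin (2 * m) → Fin (n * (2 * m))) (σ : Equiv.Perm (Fin (2 * m))),
      A (s ∘ σ) = (Equiv.Perm.sign σ : ℤ) • A s)
    (T : Fin (n * (2 * m)) → Fin (n * (2 * m)) → K) :
    ∑ k ∈ Finset.univ.filter
        (fun k : Fin (t * (2 * m)) → Fin (n * (2 * m)) =>
          ∀ i j, i < j → k i < k j),
        hyperPf t (2 * m) (fun s => A (fun i => k (s i)))
          * Matrix.det (Matrix.of fun i j : Fin (t * (2 * m)) =>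
              T (Fin.castLE (Nat.mul_le_mul_right (2 * m) ht) i) (k j))
      = hyperPf t (2 * m) (fun s =>
          ∑ κ ∈ Finset.univ.filter
              (fun κ : Fin (2 * m) → Fin (n * (2 * m)) => ∀ i j, i < j → κ i < κ j),
            A κ * Matrix.det (Matrix.of fun i j : Fin (2 * m) =>
              T (Fin.castLE (Nat.mul_le_mul_right (2 * m) ht) (s i)) (κ j))) := by
  rcases Nat.eq_zero_or_pos m with hm0 | hm
  · -- degenerate case m = 0 : all index types are empty
    subst hm0
    haveI e1 : IsEmpty (Fin (2 * 0)) := inferInstanceAs (IsEmpty (Fin 0))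
    haveI e2 : IsEmpty (Fin (t * (2 * 0))) := inferInstanceAs (IsEmpty (Fin 0))
    haveI e3 : IsEmpty (Fin (n * (2 * 0))) := inferInstanceAs (IsEmpty (Fin 0))
    have h1 : ∀ kk : Fin (t * (2 * 0)) → Fin (n * (2 * 0)), (∀ i j, i < j → kk i < kk j) :=
      fun kk i _ _ => isEmptyElim i
    have h2 : ∀ κ : Fin (2 * 0) → Fin (n * (2 * 0)), (∀ i j, i < j → κ i < κ j) :=
      fun κ i _ _ => isEmptyElim i
    rw [Finset.filter_true_of_mem (fun x _ => h1 x), Fintype.sum_unique,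
      Matrix.det_isEmpty, mul_one]
    congr 1
    funext s
    rw [Finset.filter_true_of_mem (fun x _ => h2 x), Fintype.sum_unique,
      Matrix.det_isEmpty, mul_one]
    congr 1
  · -- main case
    have hk : 0 < 2 * m := by omega
    have hke : Even (2 * m) := ⟨m, by omega⟩
    have hk2 : 2 ≤ 2 * m := by omega
    set B : Fin (t * (2 * m)) → Fin (n * (2 * m)) → K :=
      fun x y => T (Fin.castLE (Nat.mul_le_mul_right (2 * m) ht) x) y with hB
    -- Left side
    have hL : (∑ k ∈ Finset.univ.filter
        (fun k : Fin (t * (2 * m)) → Fin (n * (2 * m)) =>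
          ∀ i j, i < j → k i < k j),
        hyperPf t (2 * m) (fun s => A (fun i => k (s i)))
          * Matrix.det (Matrix.of fun i j : Fin (t * (2 * m)) =>
              T (Fin.castLE (Nat.mul_le_mul_right (2 * m) ht) i) (k j)))
        = ∑ g ∈ Finset.univ.filter
            (fun g : Fin (t * (2 * m)) → Fin (n * (2 * m)) => Function.Injective g),
            MSF.FF A g * MSF.Wt B g := by
      rw [← MSF.sum_inc_perm (fun g => MSF.FF A g * MSF.Wt B g)]
      refine Finset.sum_congr rfl fun κ _ => ?_
      have hhyp : hyperPf t (2 * m) (fun s => A (fun i => κ (s i))) = MSF.FF A κ := by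
        unfold hyperPf MSF.FF
        refine Finset.sum_congr rfl fun σ _ => ?_
        rw [MSF.smul_eq_eps_mul]
        rfl
      have hdet : Matrix.det (Matrix.of fun i j : Fin (t * (2 * m)) =>
              T (Fin.castLE (Nat.mul_le_mul_right (2 * m) ht) i) (κ j))
          = ∑ τ : Equiv.Perm (Fin (t * (2 * m))),
              (MSF.eps τ : K) * ∏ x, B x (κ (τ x)) := MSF.det_expand B κ
      rw [hhyp, hdet, Finset.mul_sum]
      refine Finset.sum_congr rfl fun τ _ => ?_
      have h3 : MSF.FF A (κ ∘ τ) = (MSF.eps τ : K) * MSF.FF A κ :=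
        MSF.FF_comp hk hke A κ hA τ
      show MSF.FF A κ * ((MSF.eps τ : K) * ∏ x, B x (κ (τ x)))
          = MSF.FF A (κ ∘ τ) * MSF.Wt B (κ ∘ τ)
      rw [h3]
      show MSF.FF A κ * ((MSF.eps τ : K) * ∏ x, B x (κ (τ x)))
          = ((MSF.eps τ : K) * MSF.FF A κ) * ∏ x, B x (κ (τ x))
      ring
    rw [hL]
    -- Right side
    unfold hyperPf
    have step1 : ∀ σ ∈ blockPerms t (2 * m),
        (Equiv.Perm.sign σ : ℤ) • ∏ p : Fin t,
          (fun s => ∑ κ ∈ Finset.univ.filter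
              (fun κ : Fin (2 * m) → Fin (n * (2 * m)) => ∀ i j, i < j → κ i < κ j),
            A κ * Matrix.det (Matrix.of fun i j : Fin (2 * m) =>
              T (Fin.castLE (Nat.mul_le_mul_right (2 * m) ht) (s i)) (κ j)))
            (fun i => σ (blkIdx p i))
        = ∑ h ∈ Finset.univ.filter
            (fun h : Fin (t * (2 * m)) → Fin (n * (2 * m)) =>
              ∀ p : Fin t, Function.Injective (fun i => h (σ (blkIdx p i)))),
            (MSF.eps σ : K) * (MSF.Pr A h σ * MSF.Wt B h) := by
      intro σ _
      rw [MSF.smul_eq_eps_mul, ← Finset.mul_sum]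
      congr 1
      calc (∏ p : Fin t,
            ∑ κ ∈ Finset.univ.filter
              (fun κ : Fin (2 * m) → Fin (n * (2 * m)) => ∀ i j, i < j → κ i < κ j),
            A κ * Matrix.det (Matrix.of fun i j : Fin (2 * m) =>
              T (Fin.castLE (Nat.mul_le_mul_right (2 * m) ht) (σ (blkIdx p i))) (κ j)))
          = ∏ p : Fin t,
              ∑ g ∈ Finset.univ.filter
                (fun g : Fin (2 * m) → Fin (n * (2 * m)) => Function.Injective g),
                A g * ∏ i, B (σ (blkIdx p i)) (g i) := by
            refine Finset.prod_congr rfl fun p _ => ?_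
            exact MSF.Q_expand A B hA (fun i => σ (blkIdx p i))
        _ = ∑ G ∈ Fintype.piFinset (fun _ : Fin t =>
              Finset.univ.filter
                (fun g : Fin (2 * m) → Fin (n * (2 * m)) => Function.Injective g)),
              ∏ p : Fin t, (A (G p) * ∏ i, B (σ (blkIdx p i)) (G p i)) :=
            Finset.prod_univ_sum _ _
        _ = ∑ h ∈ Finset.univ.filter
              (fun h : Fin (t * (2 * m)) → Fin (n * (2 * m)) =>
                ∀ p : Fin t, Function.Injective (fun i => h (σ (blkIdx p i)))),
              MSF.Pr A h σ * MSF.Wt B h := MSF.R_sigma A B σ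
    rw [Finset.sum_congr rfl step1]
    -- exchange the two sums
    rw [show (∑ σ ∈ blockPerms t (2 * m),
        ∑ h ∈ Finset.univ.filter
            (fun h : Fin (t * (2 * m)) → Fin (n * (2 * m)) =>
              ∀ p : Fin t, Function.Injective (fun i => h (σ (blkIdx p i)))),
            (MSF.eps σ : K) * (MSF.Pr A h σ * MSF.Wt B h))
      = ∑ h : Fin (t * (2 * m)) → Fin (n * (2 * m)),
          ∑ σ ∈ (blockPerms t (2 * m)).filter
            (fun σ => ∀ p : Fin t, Function.Injective (fun i => h (σ (blkIdx p i)))),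
            (MSF.eps σ : K) * (MSF.Pr A h σ * MSF.Wt B h) from by
      simp_rw [Finset.sum_filter]
      exact Finset.sum_comm]
    -- factor out the weight
    have step2 : ∀ h : Fin (t * (2 * m)) → Fin (n * (2 * m)),
        (∑ σ ∈ (blockPerms t (2 * m)).filter
            (fun σ => ∀ p : Fin t, Function.Injective (fun i => h (σ (blkIdx p i)))),
            (MSF.eps σ : K) * (MSF.Pr A h σ * MSF.Wt B h))
        = (∑ σ ∈ (blockPerms t (2 * m)).filter
            (fun σ => ∀ p : Fin t, Function.Injective (fun i => h (σ (blkIdx p i)))),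
            (MSF.eps σ : K) * MSF.Pr A h σ) * MSF.Wt B h := by
      intro h
      rw [Finset.sum_mul]
      exact Finset.sum_congr rfl fun σ _ => by ring
    rw [Finset.sum_congr rfl (fun h _ => step2 h)]
    -- split according to injectivity
    rw [← Finset.sum_filter_add_sum_filter_not Finset.univ
      (fun h : Fin (t * (2 * m)) → Fin (n * (2 * m)) => Function.Injective h)]
    have hzero : ∑ h ∈ Finset.univ.filter
        (fun h : Fin (t * (2 * m)) → Fin (n * (2 * m)) => ¬ Function.Injective h),
        (∑ σ ∈ (blockPerms t (2 * m)).filter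
            (fun σ => ∀ p : Fin t, Function.Injective (fun i => h (σ (blkIdx p i)))),
            (MSF.eps σ : K) * MSF.Pr A h σ) * MSF.Wt B h = 0 := by
      refine Finset.sum_eq_zero fun h hh => ?_
      rw [Finset.mem_filter] at hh
      rw [MSF.cancel_noninj hk hke A h hA hk2 hh.2, zero_mul]
    rw [hzero, add_zero]
    symm
    refine Finset.sum_congr rfl fun h hh => ?_
    rw [Finset.mem_filter] at hh
    congr 1
    rw [Finset.filter_true_of_mem]
    · rfl
    · intro σ _ p
      have hinj : Function.Injective (fun i : Fin (2 * m) => σ (blkIdx p i)) :=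
        fun i1 i2 h12 => (MSF.blkIdx_inj (σ.injective h12)).2
      exact hh.2.comp hinj
end

section
/- In the Grassmann algebra over a commutative ring K on generators η_1,…,η_N with coefficients given by an antisymmetric matrix Q, the coefficient of η_{i_1}⋯η_{i_{2n}} (for i_1<⋯<i_{2n}) in the product ∏_i→ (1 + ∑_{i<j} Q_{ij} η_i η_j) equals Pf((Q_{i_k i_l})_{1≤k,l≤2n}). -/
/-- The `i`-th Grassmann generator `ηᵢ` of the exterior algebra on `N` generators. -/
noncomputable def grassGen (K : Type*) [CommRing K] (N : ℕ) (i : Fin N) :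
    ExteriorAlgebra K (Fin N → K) :=
  ExteriorAlgebra.ι K (Pi.single i (1 : K))

namespace GW
open List Finset

variable {K : Type*} [CommRing K] {N : ℕ}

/-- The word of a list of pairs. -/
def word {α : Type*} : List (α × α) → List α
  | [] => []
  | q :: P => q.1 :: q.2 :: word P

@[simp] lemma word_nil {α : Type*} : word ([] : List (α × α)) = [] := rfl
@[simp] lemma word_cons {α : Type*} (q : α × α) (P : List (α × α)) :
    word (q :: P) = q.1 :: q.2 :: word P := rfl

@[simp] lemma length_word {α : Type*} (P : List (α × α)) :
    (word P).length = 2 * P.length := by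
  induction P with
  | nil => simp [word]
  | cons q P ih => simp [word, ih]; omega

lemma word_getElem_even {α : Type*} (P : List (α × α)) (p : ℕ) (hp : p < P.length)
    (h : 2 * p < (word P).length) : (word P)[2 * p] = P[p].1 := by
  induction P generalizing p with
  | nil => simp at hp
  | cons q P ih =>
    cases p with
    | zero => simp
    | succ p =>
      have h2 : 2 * (p + 1) = (2 * p) + 1 + 1 := by omega
      simp only [word_cons, h2, List.getElem_cons_succ]
      exact ih p (by simpa using hp) (by simp at h ⊢; omega)

lemma word_getElem_odd {α : Type*} (P : List (α × α)) (p : ℕ) (hp : p < P.length)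
    (h : 2 * p + 1 < (word P).length) : (word P)[2 * p + 1] = P[p].2 := by
  induction P generalizing p with
  | nil => simp at hp
  | cons q P ih =>
    cases p with
    | zero => simp
    | succ p =>
      have h2 : 2 * (p + 1) + 1 = (2 * p + 1) + 1 + 1 := by omega
      simp only [word_cons, h2, List.getElem_cons_succ]
      exact ih p (by simpa using hp) (by simp at h ⊢; omega)

/-- Coefficient of a pair list. -/
def coeffP (Q : Fin N → Fin N → K) (P : List (Fin N × Fin N)) : K :=
  (P.map fun q => Q q.1 q.2).prod

@[simp] lemma coeffP_nil (Q : Fin N → Fin N → K) : coeffP Q [] = 1 := rfl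
@[simp] lemma coeffP_cons (Q : Fin N → Fin N → K) (q) (P) :
    coeffP Q (q :: P) = Q q.1 q.2 * coeffP Q P := rfl

/-- Product of generators along a word. -/
noncomputable def etaL (K : Type*) [CommRing K] {N : ℕ} (w : List (Fin N)) :
    ExteriorAlgebra K (Fin N → K) :=
  (w.map (grassGen K N)).prod

@[simp] lemma etaL_nil : etaL K ([] : List (Fin N)) = 1 := rfl
@[simp] lemma etaL_cons (i : Fin N) (w : List (Fin N)) :
    etaL K (i :: w) = grassGen K N i * etaL K w := by simp [etaL]

/-- The finset of admissible pair choices over a list of first members. -/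
def choices : List (Fin N) → Finset (List (Fin N × Fin N))
  | [] => {[]}
  | i :: s => ((Finset.Ioi i) ×ˢ choices s).map
      ⟨fun q => (i, q.1) :: q.2, by
        rintro ⟨a, P⟩ ⟨b, R⟩ h
        simp only [List.cons.injEq, Prod.mk.injEq] at h
        exact Prod.ext h.1.2 h.2⟩

lemma mem_choices {s : List (Fin N)} {P : List (Fin N × Fin N)} :
    P ∈ choices s ↔ P.map Prod.fst = s ∧ ∀ q ∈ P, q.1 < q.2 := by
  induction s generalizing P with
  | nil =>
    simp only [choices, Finset.mem_singleton, List.map_eq_nil_iff]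
    constructor
    · rintro rfl; simp
    · rintro ⟨rfl, -⟩; rfl
  | cons i s ih =>
    simp only [choices, Finset.mem_map, Finset.mem_product, Function.Embedding.coeFn_mk]
    constructor
    · rintro ⟨⟨j, P'⟩, ⟨hj, hP'⟩, rfl⟩
      obtain ⟨h1, h2⟩ := ih.1 hP'
      refine ⟨by rw [← h1]; rfl, ?_⟩
      rintro q hq
      rcases List.mem_cons.1 hq with rfl | hq
      · simpa using (Finset.mem_Ioi.1 hj)
      · exact h2 q hq
    · rintro ⟨h1, h2⟩
      cases P with
      | nil => simp at h1
      | cons q P' =>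
        simp only [List.map_cons, List.cons.injEq] at h1
        refine ⟨⟨q.2, P'⟩, ⟨Finset.mem_Ioi.2 ?_, ih.2 ⟨h1.2, fun r hr => h2 r (.tail _ hr)⟩⟩, ?_⟩
        · rw [← h1.1]; exact h2 q (.head _)
        · simp [← h1.1]


lemma prod_one_add {A : Type*} [Ring A] {ι : Type*} [DecidableEq ι] (x : ι → A) :
    ∀ (l : List ι), l.Nodup →
      (l.map fun i => 1 + x i).prod
        = ∑ T ∈ l.toFinset.powerset, ((l.filter (· ∈ T)).map x).prod
  | [], _ => by simp
  | a :: l, h => by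
    have ha : a ∉ l := (List.nodup_cons.1 h).1
    have ha' : a ∉ l.toFinset := by simpa using ha
    have IH := prod_one_add x l (List.nodup_cons.1 h).2
    rw [List.map_cons, List.prod_cons, IH, List.toFinset_cons,
      Finset.sum_powerset_insert ha', add_mul, one_mul, Finset.mul_sum]
    congr 1
    · refine Finset.sum_congr rfl fun T hT => ?_
      have haT : a ∉ T := fun hc => ha' (Finset.mem_powerset.1 hT hc)
      have : (a :: l).filter (· ∈ T) = l.filter (· ∈ T) := by
        rw [List.filter_cons]; simp [haT]
      rw [this]
    · refine Finset.sum_congr rfl fun T hT => ?_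
      have : (a :: l).filter (· ∈ insert a T) = a :: l.filter (· ∈ T) := by
        rw [List.filter_cons]
        rw [if_pos (by simp)]
        congr 1
        refine List.filter_congr fun x hx => ?_
        have : x ≠ a := fun hc => ha (hc ▸ hx)
        simp [this]
      rw [this, List.map_cons, List.prod_cons]

/-- Expansion of the product of the quadratic sums over a list of indices. -/
lemma prod_quad (Q : Fin N → Fin N → K) (s : List (Fin N)) :
    (s.map fun i => ∑ j ∈ Finset.Ioi i, Q i j • (grassGen K N i * grassGen K N j)).prod
      = ∑ P ∈ choices s, coeffP Q P • etaL K (word P) := by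
  induction s with
  | nil => simp [choices]
  | cons i s ih =>
    rw [List.map_cons, List.prod_cons, ih]
    rw [Finset.sum_mul]
    rw [show (choices (i :: s)) = ((Finset.Ioi i) ×ˢ choices s).map _ from rfl,
      Finset.sum_map, Finset.sum_product]
    refine Finset.sum_congr rfl fun j hj => ?_
    rw [Finset.mul_sum]
    refine Finset.sum_congr rfl fun P hP => ?_
    change _ = coeffP Q ((i, j) :: P) • etaL K (word ((i, j) :: P))
    simp only [Function.Embedding.coeFn_mk, word_cons, coeffP_cons, etaL_cons]
    rw [smul_mul_smul_comm]
    rw [mul_assoc]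

/-- `Finset.sort` as a filter of `finRange`. -/
lemma sort_eq_filter (T : Finset (Fin N)) :
    T.sort (· ≤ ·) = (List.finRange N).filter (· ∈ T) := by
  refine (fun hp hs => List.Perm.eq_of_pairwise' (Finset.pairwise_sort _ _) hs hp) ?_ ?_
  · refine List.perm_of_nodup_nodup_toFinset_eq (Finset.sort_nodup _ _)
      ((List.nodup_finRange N).filter _) ?_
    ext a
    simp [List.mem_filter, Finset.mem_sort]
  · exact ((List.pairwise_lt_finRange N).filter _).imp le_of_lt


lemma etaL_ofFn {n : ℕ} (v : Fin n → Fin N) :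
    etaL K (List.ofFn v)
      = ExteriorAlgebra.ιMulti K n (fun k => Pi.single (v k) (1 : K)) := by
  rw [ExteriorAlgebra.ιMulti_apply, etaL, List.map_ofFn]
  rfl

lemma etaL_eq_iotaMulti (w : List (Fin N)) :
    etaL K w = ExteriorAlgebra.ιMulti K w.length
      (fun k => Pi.single (w.get k) (1 : K)) := by
  conv_lhs => rw [show w = List.ofFn w.get from (List.ofFn_get w).symm]
  rw [etaL_ofFn]

lemma etaL_zero_of_not_nodup (w : List (Fin N)) (hw : ¬ w.Nodup) : etaL K w = 0 := by
  rw [etaL_eq_iotaMulti]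
  rw [List.nodup_iff_injective_get] at hw
  simp only [Function.Injective, not_forall] at hw
  obtain ⟨i, j, hij, hne⟩ := hw
  exact AlternatingMap.map_eq_zero_of_eq _ (fun k => (Pi.single (w.get k) (1 : K) : Fin N → K))
    (i := i) (j := j) (by simp only [hij]) hne

lemma etaL_perm {n : ℕ} (v : Fin n → Fin N) (σ : Equiv.Perm (Fin n)) :
    etaL K (List.ofFn fun k => v (σ k))
      = (Equiv.Perm.sign σ : ℤ) • etaL K (List.ofFn v) := by
  rw [etaL_ofFn, etaL_ofFn]
  have h := AlternatingMap.map_perm (ExteriorAlgebra.ιMulti K n)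
    (fun k => (Pi.single (v k) (1 : K) : Fin N → K)) σ
  have h2 : ((fun k => (Pi.single (v k) (1 : K) : Fin N → K)) ∘ σ)
      = fun k => (Pi.single (v (σ k)) (1 : K) : Fin N → K) := rfl
  rw [h2] at h
  rw [h, Units.smul_def]


/-- All admissible pair lists. -/
def allP (N : ℕ) : Finset (List (Fin N × Fin N)) :=
  Finset.univ.biUnion fun T : Finset (Fin N) => choices (T.sort (· ≤ ·))

lemma mem_allP {P : List (Fin N × Fin N)} :
    P ∈ allP N ↔ (P.map Prod.fst).Pairwise (· < ·) ∧ ∀ q ∈ P, q.1 < q.2 := by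
  simp only [allP, Finset.mem_biUnion, Finset.mem_univ, true_and]
  constructor
  · rintro ⟨T, hT⟩
    obtain ⟨h1, h2⟩ := mem_choices.1 hT
    exact ⟨h1 ▸ (Finset.sortedLT_sort T).pairwise, h2⟩
  · rintro ⟨h1, h2⟩
    refine ⟨(P.map Prod.fst).toFinset, mem_choices.2 ⟨?_, h2⟩⟩
    refine (fun hp => List.Perm.eq_of_pairwise' (h1.imp le_of_lt) (Finset.pairwise_sort _ _) hp) ?_
    refine List.perm_of_nodup_nodup_toFinset_eq (h1.imp ne_of_lt)
      (Finset.sort_nodup _ _) ?_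
    simp

/-- The ordered product of generators over a finset. -/
noncomputable def etaG (K : Type*) [CommRing K] {N : ℕ} (S : Finset (Fin N)) :
    ExteriorAlgebra K (Fin N → K) :=
  (List.ofFn fun a : Fin S.card => grassGen K N ((S.orderIsoOfFin rfl a) : Fin N)).prod

lemma etaG_eq {S : Finset (Fin N)} {n : ℕ} (h2 : S.card = 2 * n) :
    etaG K S = etaL K (List.ofFn fun k : Fin (2 * n) => S.orderEmbOfFin h2 k) := by
  rw [etaG, etaL, List.map_ofFn]
  congr 1
  apply List.ext_getElem (by simp [h2])
  intro k hk hk'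
  simp only [List.getElem_ofFn, Function.comp_apply]
  rfl



lemma word_Pof {n : ℕ} {S : Finset (Fin N)} (h2 : S.card = 2 * n)
    (σ : Equiv.Perm (Fin (2 * n))) :
    word (List.ofFn fun p : Fin n =>
        (S.orderEmbOfFin h2 (σ (pairIdx p 0)), S.orderEmbOfFin h2 (σ (pairIdx p 1))))
      = List.ofFn (fun k : Fin (2 * n) => S.orderEmbOfFin h2 (σ k)) := by
  apply List.ext_getElem (by simp)
  intro k hk hk'
  simp only [List.getElem_ofFn]
  rcases Nat.even_or_odd k with he | ho
  · obtain ⟨p, rfl⟩ : ∃ p, k = 2 * p := by rcases he with ⟨p, hp⟩; exact ⟨p, by omega⟩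
    have hp : p < n := by simp at hk'; omega
    rw [word_getElem_even _ p (by simpa using hp)]
    simp only [List.getElem_ofFn]
    rfl
  · obtain ⟨p, rfl⟩ : ∃ p, k = 2 * p + 1 := by rcases ho with ⟨p, hp⟩; exact ⟨p, by omega⟩
    have hp : p < n := by simp at hk'; omega
    rw [word_getElem_odd _ p (by simpa using hp)]
    simp only [List.getElem_ofFn]
    rfl

lemma word_getElem_even' {α : Type*} (P : List (α × α)) (k p : ℕ) (hk : k = 2 * p)
    (hp : p < P.length) (h : k < (word P).length) : (word P)[k] = P[p].1 := by
  subst hk; exact word_getElem_even P p hp h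

lemma word_getElem_odd' {α : Type*} (P : List (α × α)) (k p : ℕ) (hk : k = 2 * p + 1)
    (hp : p < P.length) (h : k < (word P).length) : (word P)[k] = P[p].2 := by
  subst hk; exact word_getElem_odd P p hp h

lemma fiber_sum (Q : Fin N → Fin N → K) (S : Finset (Fin N)) (n : ℕ) (h2 : S.card = 2 * n) :
    (∑ P ∈ (allP N).filter (fun P => (word P).Nodup ∧ (word P).toFinset = S),
      coeffP Q P • etaL K (word P))
    = pfaffian n (fun a b => Q (S.orderEmbOfFin h2 a) (S.orderEmbOfFin h2 b)) • etaG K S := by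
  classical
  set E := S.orderEmbOfFin h2 with hE
  rw [pfaffian, Finset.sum_smul]
  refine (Finset.sum_bij
    (fun σ _ => List.ofFn fun p : Fin n => (E (σ (pairIdx p 0)), E (σ (pairIdx p 1))))
    ?_ ?_ ?_ ?_).symm
  · -- membership
    intro σ hσ
    obtain ⟨hc1, hc2⟩ := (Finset.mem_filter.1 hσ).2
    rw [Finset.mem_filter]
    refine ⟨mem_allP.2 ⟨?_, ?_⟩, ?_, ?_⟩
    · rw [List.map_ofFn]
      rw [List.pairwise_ofFn]
      intro i j hij
      exact E.strictMono (hc2 i j hij)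
    · intro q hq
      obtain ⟨p, rfl⟩ := List.mem_ofFn.1 hq
      exact E.strictMono (hc1 p)
    · rw [word_Pof h2, List.nodup_ofFn]
      exact E.injective.comp σ.injective
    · rw [word_Pof h2]
      ext a
      simp only [List.mem_toFinset, List.mem_ofFn, Set.mem_range]
      constructor
      · rintro ⟨k, rfl⟩; exact Finset.orderEmbOfFin_mem S h2 (σ k)
      · intro ha
        have : a ∈ Set.range (E : Fin (2 * n) → Fin N) := by
          rw [hE, Finset.range_orderEmbOfFin]; exact ha
        obtain ⟨b, hb⟩ := this
        exact ⟨σ.symm b, by simp; exact hb⟩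
  · -- injectivity
    intro σ hσ σ' hσ' h
    have := congrArg word h
    rw [word_Pof h2, word_Pof h2, List.ofFn_inj] at this
    ext k
    exact congrArg Fin.val (E.injective (congrFun this k))
  · -- surjectivity
    intro P hP
    obtain ⟨hPall, hnd, htf⟩ := Finset.mem_filter.1 hP
    obtain ⟨hsor, hlt⟩ := mem_allP.1 hPall
    have hwlen : (word P).length = 2 * n := by
      rw [← h2, ← htf]
      exact (List.toFinset_card_of_nodup hnd).symm
    have hPlen : P.length = n := by have := length_word P; omega
    have hidx : ∀ k : Fin (2 * n), (k : ℕ) < (word P).length := by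
      intro k; have := k.isLt; omega
    have hmem : ∀ k : Fin (2 * n), (word P)[(k : ℕ)]'(hidx k) ∈ S := by
      intro k
      rw [← htf]
      exact List.mem_toFinset.2 (List.getElem_mem _)
    set v : Fin (2 * n) → Fin (2 * n) :=
      fun k => (S.orderIsoOfFin h2).symm ⟨(word P)[(k : ℕ)]'(hidx k), hmem k⟩ with hv
    have hvinj : Function.Injective v := by
      intro a b hab
      have h3 : (word P)[(a : ℕ)]'(hidx a) = (word P)[(b : ℕ)]'(hidx b) := by
        simpa using congrArg Subtype.val ((S.orderIsoOfFin h2).symm.injective hab)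
      have h4 : (⟨(a : ℕ), hidx a⟩ : Fin (word P).length) = ⟨(b : ℕ), hidx b⟩ :=
        List.nodup_iff_injective_get.mp hnd (by simpa [List.get_eq_getElem] using h3)
      have h5 : (a : ℕ) = (b : ℕ) := by simpa [Fin.ext_iff] using h4
      exact Fin.ext h5
    set σ := Equiv.ofBijective v (Finite.injective_iff_bijective.mp hvinj) with hσdef
    have hEv : ∀ k : Fin (2 * n), E (σ k) = (word P)[(k : ℕ)]'(hidx k) := by
      intro k
      show E (v k) = _
      rw [hv, hE]
      show ((S.orderIsoOfFin h2) ((S.orderIsoOfFin h2).symm _) : Fin N) = _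
      rw [OrderIso.apply_symm_apply]
    refine ⟨σ, ?_, ?_⟩
    · -- σ ∈ matchings n
      rw [matchings, Finset.mem_filter]
      refine ⟨Finset.mem_univ _, ?_, ?_⟩
      · intro p
        have hp : (p : ℕ) < P.length := by have := p.isLt; omega
        rw [← OrderEmbedding.lt_iff_lt E, hEv, hEv,
          word_getElem_even' P _ (p : ℕ) (by simp [pairIdx]) hp,
          word_getElem_odd' P _ (p : ℕ) (by simp [pairIdx]) hp]
        exact hlt _ (List.getElem_mem _)
      · intro p q hpq
        have hp : (p : ℕ) < P.length := by have := p.isLt; omega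
        have hq : (q : ℕ) < P.length := by have := q.isLt; omega
        rw [← OrderEmbedding.lt_iff_lt E, hEv, hEv,
          word_getElem_even' P _ (p : ℕ) (by simp [pairIdx]) hp,
          word_getElem_even' P _ (q : ℕ) (by simp [pairIdx]) hq]
        have hs := List.Pairwise.rel_get_of_lt hsor
          (a := ⟨(p : ℕ), by simpa using hp⟩) (b := ⟨(q : ℕ), by simpa using hq⟩)
          (by simpa using hpq)
        simpa [List.get_eq_getElem] using hs
    · -- Pof σ = P
      apply List.ext_getElem (by simp [hPlen])
      intro p hp hp2
      have hp3 : p < P.length := hp2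
      simp only [List.getElem_ofFn]
      rw [hEv, hEv,
        word_getElem_even' P _ p (by simp [pairIdx]) hp3,
        word_getElem_odd' P _ p (by simp [pairIdx]) hp3]
  · -- values
    intro σ hσ
    rw [word_Pof h2]
    have hcoeff : coeffP Q (List.ofFn fun p : Fin n =>
        (E (σ (pairIdx p 0)), E (σ (pairIdx p 1))))
        = ∏ p : Fin n, Q (E (σ (pairIdx p 0))) (E (σ (pairIdx p 1))) := by
      rw [coeffP, List.map_ofFn, List.prod_ofFn]
      rfl
    rw [hcoeff, etaG_eq h2, ← hE]
    rw [etaL_perm (fun k => E k) σ]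
    set c := ∏ p : Fin n, Q (E (σ (pairIdx p 0))) (E (σ (pairIdx p 1)))
    set x := etaL K (List.ofFn fun k => E k)
    set z := ((Equiv.Perm.sign σ : ℤ))
    rw [← Int.cast_smul_eq_zsmul K z x, smul_comm, zsmul_eq_mul, mul_smul,
      Int.cast_smul_eq_zsmul]

end GW

/-- **Fermionic Wick formula, algebraic form**: in the Grassmann algebra over a
commutative ring `K` on generators `η₁,…,η_N`, for an antisymmetric matrix `Q`, the
ordered product `∏ᵢ→ (1 + ∑_{i<j} Q_{ij} ηᵢηⱼ)` expands as
`∑_S c_S η_S` where, for `S` listed increasingly as `i₁ < ⋯ < i_r`, the coefficient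
`c_S` is `Pf((Q_{i_k i_l}))` if `r` is even and `0` otherwise; in particular the
coefficient of `η_{i₁}⋯η_{i_{2n}}` is `Pf((Q_{i_k i_l})_{1≤k,l≤2n})`. -/
theorem grassmann_wick {K : Type*} [CommRing K] (N : ℕ)
    (Q : Fin N → Fin N → K) (hQ : ∀ i j, Q j i = - Q i j) :
    (List.ofFn fun i : Fin N =>
        (1 : ExteriorAlgebra K (Fin N → K))
          + ∑ j ∈ Finset.Ioi i, Q i j • (grassGen K N i * grassGen K N j)).prod
      = ∑ S : Finset (Fin N),
          (if h : S.card % 2 = 0 then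
              pfaffian (S.card / 2) (fun a b =>
                Q (S.orderIsoOfFin (by omega : S.card = 2 * (S.card / 2)) a : Fin N)
                  (S.orderIsoOfFin (by omega : S.card = 2 * (S.card / 2)) b : Fin N))
            else 0) •
            (List.ofFn fun a : Fin S.card => grassGen K N (S.orderIsoOfFin rfl a)).prod := by
  classical
  rw [List.ofFn_eq_map,
    GW.prod_one_add (fun i : Fin N => ∑ j ∈ Finset.Ioi i,
      Q i j • (grassGen K N i * grassGen K N j)) _ (List.nodup_finRange N),
    List.toFinset_finRange, Finset.powerset_univ]
  have e2 : ∀ T : Finset (Fin N),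
      (((List.finRange N).filter (· ∈ T)).map (fun i => ∑ j ∈ Finset.Ioi i,
        Q i j • (grassGen K N i * grassGen K N j))).prod
      = ∑ P ∈ GW.choices (T.sort (· ≤ ·)), GW.coeffP Q P • GW.etaL K (GW.word P) :=
    fun T => by rw [← GW.sort_eq_filter, GW.prod_quad]
  rw [Finset.sum_congr rfl fun T _ => e2 T]
  have hdisj : (↑(Finset.univ : Finset (Finset (Fin N))) : Set (Finset (Fin N))).PairwiseDisjoint
      (fun T => GW.choices (T.sort (· ≤ ·))) := by
    intro T _ T' _ hne
    rw [Function.onFun, Finset.disjoint_left]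
    intro P hP hP'
    apply hne
    have h1 := (GW.mem_choices.1 hP).1
    have h2 := (GW.mem_choices.1 hP').1
    rw [← Finset.sort_toFinset (s := T) (r := (· ≤ ·)), ← h1, h2, Finset.sort_toFinset]
  rw [← Finset.sum_biUnion hdisj]
  rw [show (Finset.univ.biUnion fun T : Finset (Fin N) => GW.choices (T.sort (· ≤ ·)))
      = GW.allP N from rfl]
  rw [← Finset.sum_filter_add_sum_filter_not (GW.allP N) (fun P => (GW.word P).Nodup)]
  have hz : ∑ P ∈ (GW.allP N).filter (fun P => ¬ (GW.word P).Nodup),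
      GW.coeffP Q P • GW.etaL K (GW.word P) = 0 := by
    refine Finset.sum_eq_zero fun P hP => ?_
    rw [GW.etaL_zero_of_not_nodup _ (Finset.mem_filter.1 hP).2, smul_zero]
  rw [hz, add_zero]
  rw [← Finset.sum_fiberwise ((GW.allP N).filter (fun P => (GW.word P).Nodup))
    (fun P => (GW.word P).toFinset) (fun P => GW.coeffP Q P • GW.etaL K (GW.word P))]
  refine Finset.sum_congr rfl fun S _ => ?_
  rw [Finset.filter_filter]
  by_cases h : S.card % 2 = 0
  · rw [dif_pos h]
    have h2 : S.card = 2 * (S.card / 2) := by omega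
    exact GW.fiber_sum Q S _ h2
  · rw [dif_neg h, zero_smul]
    refine Finset.sum_eq_zero fun P hP => ?_
    obtain ⟨-, hnd, htf⟩ := Finset.mem_filter.1 hP
    have hc : S.card = 2 * P.length := by
      rw [← htf, List.toFinset_card_of_nodup hnd, GW.length_word]
    exact absurd (by omega : S.card % 2 = 0) h
end
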